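/- arXiv:2103.00038 — 6 statements merged into one kernel-verified Lean document; each statement's English description precedes it below -/
import Mathlib

section
/- Let ν > 2 and set k = √(ν² − 4)/ν, so 0 < k < 1. Then for every x ∈ ℝ, with φ = arcsin(tanh x), one has ∫₀ˣ √(ν² − 2 + 2·cosh(2s)) ds = ν·(F(φ,k) − E(φ,k)) + tanh(x)·√(ν² − 2 + 2·cosh(2x)). -/
open Real

/-- Incomplete elliptic integral of the first kind. -/
noncomputable def ellipticF (φ k : ℝ) : ℝ :=
  ∫ θ in (0:ℝ)..φ, 1 / Real.sqrt (1 - k ^ 2 * Real.sin θ ^ 2)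

/-- Incomplete elliptic integral of the second kind. -/
noncomputable def ellipticE (φ k : ℝ) : ℝ :=
  ∫ θ in (0:ℝ)..φ, Real.sqrt (1 - k ^ 2 * Real.sin θ ^ 2)

lemma tanh_sq_lt_one (t : ℝ) : Real.tanh t ^ 2 < 1 := by
  have hc := Real.cosh_pos t
  have hsq := Real.cosh_sq t
  rw [Real.tanh_eq_sinh_div_cosh, div_pow, div_lt_one (by positivity)]
  nlinarith

lemma hasDerivAt_tanh' (t : ℝ) :
    HasDerivAt Real.tanh (1 - Real.tanh t ^ 2) t := by
  have hc := Real.cosh_pos t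
  have h : HasDerivAt (fun x => Real.sinh x / Real.cosh x)
      ((Real.cosh t * Real.cosh t - Real.sinh t * Real.sinh t) / Real.cosh t ^ 2) t :=
    (Real.hasDerivAt_sinh t).div (Real.hasDerivAt_cosh t) hc.ne'
  have heq : (Real.cosh t * Real.cosh t - Real.sinh t * Real.sinh t) / Real.cosh t ^ 2
      = 1 - Real.tanh t ^ 2 := by
    rw [Real.tanh_eq_sinh_div_cosh, div_pow]
    have hsq := Real.cosh_sq t
    field_simp
  rw [heq] at h
  exact h.congr_of_eventuallyEq (Filter.Eventually.of_forall fun x => by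
    rw [Real.tanh_eq_sinh_div_cosh])

/-- For `ν > 2` and `k = √(ν² − 4)/ν`, the antiderivative of `√(ν² − 2 + 2 cosh 2s)`
is expressed via incomplete elliptic integrals. -/
theorem stmt_1 (ν : ℝ) (hν : 2 < ν) (k : ℝ) (hk : k = Real.sqrt (ν ^ 2 - 4) / ν) :
    ∀ x : ℝ,
      ∫ s in (0:ℝ)..x, Real.sqrt (ν ^ 2 - 2 + 2 * Real.cosh (2 * s)) =
        ν * (ellipticF (Real.arcsin (Real.tanh x)) k
              - ellipticE (Real.arcsin (Real.tanh x)) k)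
          + Real.tanh x * Real.sqrt (ν ^ 2 - 2 + 2 * Real.cosh (2 * x)) := by
  intro x
  have hν0 : (0:ℝ) < ν := by linarith
  have hν4 : (0:ℝ) ≤ ν ^ 2 - 4 := by nlinarith
  have hk2 : k ^ 2 = (ν ^ 2 - 4) / ν ^ 2 := by
    rw [hk, div_pow, Real.sq_sqrt hν4]
  have hk2lt : k ^ 2 < 1 := by
    rw [hk2, div_lt_one (by positivity)]; linarith
  have hk2nn : 0 ≤ k ^ 2 := sq_nonneg k
  -- continuity of elliptic integrands
  have hpos : ∀ θ : ℝ, 0 < 1 - k ^ 2 * Real.sin θ ^ 2 := by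
    intro θ
    have h1 : Real.sin θ ^ 2 ≤ 1 := Real.sin_sq_le_one θ
    nlinarith
  have hcontE : Continuous fun θ : ℝ => Real.sqrt (1 - k ^ 2 * Real.sin θ ^ 2) :=
    (continuous_const.sub (continuous_const.mul ((Real.continuous_sin).pow 2))).sqrt
  have hcontF : Continuous fun θ : ℝ => 1 / Real.sqrt (1 - k ^ 2 * Real.sin θ ^ 2) := by
    apply continuous_const.div hcontE
    intro θ
    exact (Real.sqrt_pos.mpr (hpos θ)).ne'
  set f : ℝ → ℝ := fun s => Real.sqrt (ν ^ 2 - 2 + 2 * Real.cosh (2 * s)) with hf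
  have hfpos : ∀ t : ℝ, 0 < ν ^ 2 - 2 + 2 * Real.cosh (2 * t) := by
    intro t
    have := Real.one_le_cosh (2 * t)
    nlinarith
  have hfcont : Continuous f :=
    (continuous_const.add (continuous_const.mul
      (Real.continuous_cosh.comp (continuous_const.mul continuous_id)))).sqrt
  set G : ℝ → ℝ := fun y => ν * (ellipticF (Real.arcsin (Real.tanh y)) k
      - ellipticE (Real.arcsin (Real.tanh y)) k) + Real.tanh y * f y with hG
  have key : ∀ t : ℝ, HasDerivAt G (f t) t := by
    intro t
    have hc : 0 < Real.cosh t := Real.cosh_pos t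
    have ht2 : Real.tanh t ^ 2 < 1 := _root_.tanh_sq_lt_one t
    have ht1 : Real.tanh t ≠ 1 := by nlinarith
    have ht1' : Real.tanh t ≠ -1 := by nlinarith
    have hsin : Real.sin (Real.arcsin (Real.tanh t)) = Real.tanh t :=
      Real.sin_arcsin (by nlinarith) (by nlinarith)
    set Q : ℝ := Real.sqrt (ν ^ 2 - 2 + 2 * Real.cosh (2 * t)) with hQ
    have hQ2 : Q ^ 2 = ν ^ 2 + 4 * Real.sinh t ^ 2 := by
      rw [hQ, Real.sq_sqrt (hfpos t).le, Real.cosh_two_mul, Real.cosh_sq]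
      ring
    have hQpos : 0 < Q := Real.sqrt_pos.mpr (hfpos t)
    -- √(1 - k² tanh² t) = Q / (ν cosh t)
    have hW : Real.sqrt (1 - k ^ 2 * Real.tanh t ^ 2) = Q / (ν * Real.cosh t) := by
      have h1 : 1 - k ^ 2 * Real.tanh t ^ 2 = (Q / (ν * Real.cosh t)) ^ 2 := by
        rw [div_pow, mul_pow, hQ2, hk2, Real.tanh_eq_sinh_div_cosh, div_pow]
        have hsq := Real.cosh_sq t
        field_simp
        nlinarith
      rw [h1, Real.sqrt_sq (by positivity)]
    -- derivative of arcsin ∘ tanh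
    have hAT : HasDerivAt (fun y => Real.arcsin (Real.tanh y))
        (1 / Real.sqrt (1 - Real.tanh t ^ 2) * (1 - Real.tanh t ^ 2)) t :=
      (Real.hasDerivAt_arcsin ht1' ht1).comp t (hasDerivAt_tanh' t)
    have hsqt : Real.sqrt (1 - Real.tanh t ^ 2) = 1 / Real.cosh t := by
      have h1 : 1 - Real.tanh t ^ 2 = (1 / Real.cosh t) ^ 2 := by
        rw [Real.tanh_eq_sinh_div_cosh, div_pow, div_pow]
        have hsq := Real.cosh_sq t
        field_simp
        linarith
      rw [h1, Real.sqrt_sq (by positivity)]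
    have hAT2 : HasDerivAt (fun y => Real.arcsin (Real.tanh y)) (1 / Real.cosh t) t := by
      convert hAT using 1
      rw [hsqt]
      have h1 : 1 - Real.tanh t ^ 2 = (1 / Real.cosh t) ^ 2 := by
        rw [Real.tanh_eq_sinh_div_cosh, div_pow, div_pow]
        have hsq := Real.cosh_sq t
        field_simp
        linarith
      rw [h1]
      rw [div_pow]
      field_simp
    set A : ℝ := Real.arcsin (Real.tanh t) with hA
    -- derivative of ellipticF in φ at A
    have hF : HasDerivAt (fun φ => ellipticF φ k)
        (1 / Real.sqrt (1 - k ^ 2 * Real.sin A ^ 2)) A :=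
      intervalIntegral.integral_hasDerivAt_right (hcontF.intervalIntegrable _ _)
        (hcontF.stronglyMeasurable.stronglyMeasurableAtFilter) hcontF.continuousAt
    have hE : HasDerivAt (fun φ => ellipticE φ k)
        (Real.sqrt (1 - k ^ 2 * Real.sin A ^ 2)) A :=
      intervalIntegral.integral_hasDerivAt_right (hcontE.intervalIntegrable _ _)
        (hcontE.stronglyMeasurable.stronglyMeasurableAtFilter) hcontE.continuousAt
    -- compose
    have hFc : HasDerivAt (fun y => ellipticF (Real.arcsin (Real.tanh y)) k)
        (1 / Real.sqrt (1 - k ^ 2 * Real.tanh t ^ 2) * (1 / Real.cosh t)) t := by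
      have := hF.comp t hAT2
      simpa [hsin, Function.comp_def] using this
    have hEc : HasDerivAt (fun y => ellipticE (Real.arcsin (Real.tanh y)) k)
        (Real.sqrt (1 - k ^ 2 * Real.tanh t ^ 2) * (1 / Real.cosh t)) t := by
      have := hE.comp t hAT2
      simpa [hsin, Function.comp_def] using this
    -- derivative of f
    have hfd : HasDerivAt f (4 * Real.sinh t * Real.cosh t / Q) t := by
      have hin : HasDerivAt (fun y : ℝ => ν ^ 2 - 2 + 2 * Real.cosh (2 * y))
          (2 * (Real.sinh (2 * t) * 2)) t := by
        have h1 : HasDerivAt (fun y : ℝ => 2 * y) (2 : ℝ) t := by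
          simpa using (hasDerivAt_id t).const_mul (2:ℝ)
        have h2 : HasDerivAt (fun y : ℝ => Real.cosh (2 * y)) (Real.sinh (2 * t) * 2) t :=
          (Real.hasDerivAt_cosh (2 * t)).comp t h1
        exact (h2.const_mul 2).const_add _
      have := (Real.hasDerivAt_sqrt (hfpos t).ne').comp t hin
      refine this.congr_deriv ?_
      rw [← hQ, Real.sinh_two_mul]
      field_simp
      ring
    -- assemble
    have hGd : HasDerivAt G
        (ν * (1 / Real.sqrt (1 - k ^ 2 * Real.tanh t ^ 2) * (1 / Real.cosh t)
            - Real.sqrt (1 - k ^ 2 * Real.tanh t ^ 2) * (1 / Real.cosh t))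
          + ((1 - Real.tanh t ^ 2) * f t
            + Real.tanh t * (4 * Real.sinh t * Real.cosh t / Q))) t :=
      ((hFc.sub hEc).const_mul ν).add ((hasDerivAt_tanh' t).mul hfd)
    convert hGd using 1
    have hone : 1 - Real.tanh t ^ 2 = 1 / Real.cosh t ^ 2 := by
      rw [Real.tanh_eq_sinh_div_cosh, div_pow]
      have hsq := Real.cosh_sq t
      field_simp
      linarith
    rw [hW, hf]
    simp only [← hQ]
    rw [hone, Real.tanh_eq_sinh_div_cosh]
    have hcne : Real.cosh t ≠ 0 := hc.ne'
    have hQne : Q ≠ 0 := hQpos.ne'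
    have hrhs : ν * (1 / (Q / (ν * Real.cosh t)) * (1 / Real.cosh t)
          - Q / (ν * Real.cosh t) * (1 / Real.cosh t))
        + (1 / Real.cosh t ^ 2 * Q
          + Real.sinh t / Real.cosh t * (4 * Real.sinh t * Real.cosh t / Q)) =
        ((ν ^ 2 + 4 * Real.sinh t ^ 2) * Real.cosh t ^ 2) / (Q * Real.cosh t ^ 2) := by
      field_simp
      ring
    rw [hrhs, ← hQ2]
    rw [pow_two Q]
    field_simp
  have hint := intervalIntegral.integral_eq_sub_of_hasDerivAt
    (fun t _ => key t) (hfcont.intervalIntegrable 0 x)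
  rw [hint]
  have h0 : G 0 = 0 := by
    simp [hG, ellipticF, ellipticE, Real.tanh_eq_sinh_div_cosh]
  rw [h0, sub_zero]
end

section
/- Let ν > 0. Then, as x → ∞, the function x ↦ √(ν² + e^{2x}) + νx − ν·log(ν + √(ν² + e^{2x})) − eˣ is O(e^{−x}). -/
open Real Filter Asymptotics

/-- As `x → ∞`, `√(ν² + e^{2x}) + νx − ν log(ν + √(ν² + e^{2x})) − eˣ = O(e^{−x})`. -/
theorem stmt_5 (ν : ℝ) (hν : 0 < ν) :
    (fun x : ℝ =>
        Real.sqrt (ν ^ 2 + Real.exp (2 * x)) + ν * x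
          - ν * Real.log (ν + Real.sqrt (ν ^ 2 + Real.exp (2 * x)))
          - Real.exp x)
      =O[atTop] (fun x => Real.exp (-x)) := by
  rw [isBigO_iff]
  refine ⟨ν ^ 2 + (ν ^ 2 + ν ^ 3), ?_⟩
  filter_upwards [eventually_ge_atTop 0] with x hx
  have he : (0:ℝ) < Real.exp x := Real.exp_pos x
  have he1 : (1:ℝ) ≤ Real.exp x := Real.one_le_exp hx
  set e := Real.exp x with hedef
  have h2 : Real.exp (2 * x) = e ^ 2 := by
    rw [two_mul, Real.exp_add]; ring
  set s := Real.sqrt (ν ^ 2 + Real.exp (2 * x)) with hs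
  have hsnn : 0 ≤ s := Real.sqrt_nonneg _
  have hsq : s ^ 2 = ν ^ 2 + e ^ 2 := by
    rw [hs, Real.sq_sqrt (by positivity), h2]
  have hse : e ≤ s := by
    nlinarith [hsq, hsnn]
  -- bound on s - e
  have h1 : s - e ≤ ν ^ 2 / e := by
    rw [le_div_iff₀ he]
    nlinarith [hsq, hse]
  have h1' : 0 ≤ s - e := by linarith
  -- the log term
  have hu : (0:ℝ) < (ν + s) / e := by positivity
  have hu1 : 1 ≤ (ν + s) / e := by
    rw [le_div_iff₀ he]; linarith
  have hlog : Real.log (ν + s) = Real.log ((ν + s) / e) + x := by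
    rw [Real.log_div (by positivity) (ne_of_gt he), hedef, Real.log_exp]; ring
  have hlognn : 0 ≤ Real.log ((ν + s) / e) := Real.log_nonneg hu1
  have hlogle : Real.log ((ν + s) / e) ≤ (ν + ν ^ 2) / e := by
    have := Real.log_le_sub_one_of_pos hu
    have hub : (ν + s) / e - 1 ≤ (ν + ν ^ 2) / e := by
      rw [div_sub_one (ne_of_gt he), div_le_div_iff₀ he he]
      have : ν ^ 2 / e ≤ ν ^ 2 := by
        rw [div_le_iff₀ he]; nlinarith
      nlinarith [h1]
    linarith
  -- combine
  have hf : s + ν * x - ν * Real.log (ν + s) - e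
      = (s - e) - ν * Real.log ((ν + s) / e) := by
    rw [hlog]; ring
  rw [Real.norm_eq_abs, Real.norm_eq_abs, hf, Real.exp_neg, ← hedef,
    abs_of_pos (by positivity : (0:ℝ) < e⁻¹)]
  rw [abs_le]
  constructor
  · have : ν * Real.log ((ν + s) / e) ≤ ν * ((ν + ν ^ 2) / e) :=
      mul_le_mul_of_nonneg_left hlogle hν.le
    have hC : ν * ((ν + ν ^ 2) / e) = (ν ^ 2 + ν ^ 3) * e⁻¹ := by
      field_simp
    have : ν * Real.log ((ν + s) / e) ≤ (ν ^ 2 + ν ^ 3) * e⁻¹ := by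
      rw [← hC]; exact this
    nlinarith [h1', mul_pos (pow_pos hν 2) (inv_pos.mpr he)]
  · have hνlognn : 0 ≤ ν * Real.log ((ν + s) / e) := by positivity
    have : s - e ≤ ν ^ 2 * e⁻¹ := by
      rw [div_eq_mul_inv] at h1; exact h1
    nlinarith [mul_pos (show (0:ℝ) < ν ^ 2 + ν ^ 3 by positivity) (inv_pos.mpr he)]
end

section
/- The complete elliptic integral of the first kind satisfies K(k) − log(4/√(1 − k²)) → 0 as k → 1⁻. -/
open Real Filter MeasureTheory intervalIntegral

/-- Complete elliptic integral of the first kind. -/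
noncomputable def ellipticK (k : ℝ) : ℝ :=
  ∫ θ in (0:ℝ)..(Real.pi / 2), 1 / Real.sqrt (1 - k ^ 2 * Real.sin θ ^ 2)

namespace EllipticAux

lemma inner_pos {k : ℝ} (hk0 : 0 < k) (hk1 : k < 1) (θ : ℝ) :
    0 < 1 - k ^ 2 * Real.sin θ ^ 2 := by
  nlinarith [Real.sin_sq_le_one θ, sq_nonneg (Real.sin θ), sq_nonneg k]

lemma cont_inner (k : ℝ) : Continuous (fun θ : ℝ => 1 - k ^ 2 * Real.sin θ ^ 2) := by
  continuity

/-- Derivative of the explicit antiderivative of `sin θ / √(1 - k²sin²θ)`. -/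
lemma hasDerivAt_anti {k : ℝ} (hk0 : 0 < k) (hk1 : k < 1) (θ : ℝ) (hθ : 0 ≤ Real.cos θ) :
    HasDerivAt (fun θ : ℝ => -(1/k) * Real.log (k * Real.cos θ +
        Real.sqrt (1 - k ^ 2 * Real.sin θ ^ 2)))
      (Real.sin θ / Real.sqrt (1 - k ^ 2 * Real.sin θ ^ 2)) θ := by
  have hin := inner_pos hk0 hk1 θ
  set s := Real.sqrt (1 - k ^ 2 * Real.sin θ ^ 2) with hs
  have hs0 : 0 < s := Real.sqrt_pos.2 hin
  have hssq : s ^ 2 = 1 - k ^ 2 * Real.sin θ ^ 2 := Real.sq_sqrt hin.le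
  have harg : 0 < k * Real.cos θ + s := by positivity
  have h1 : HasDerivAt (fun θ : ℝ => 1 - k ^ 2 * Real.sin θ ^ 2)
      (-(k ^ 2 * (2 * Real.sin θ * Real.cos θ))) θ := by
    have := ((Real.hasDerivAt_sin θ).pow 2).const_mul (k ^ 2)
    refine ((hasDerivAt_const θ (1:ℝ)).sub this).congr_deriv ?_
    simp
  have h2 : HasDerivAt (fun θ : ℝ => Real.sqrt (1 - k ^ 2 * Real.sin θ ^ 2))
      (-(k ^ 2 * (2 * Real.sin θ * Real.cos θ)) / (2 * s)) θ := h1.sqrt hin.ne'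
  have h3 : HasDerivAt (fun θ : ℝ => k * Real.cos θ + Real.sqrt (1 - k ^ 2 * Real.sin θ ^ 2))
      (k * (-Real.sin θ) + -(k ^ 2 * (2 * Real.sin θ * Real.cos θ)) / (2 * s)) θ :=
    ((Real.hasDerivAt_cos θ).const_mul k).add h2
  have h4 := (h3.log harg.ne').const_mul (-(1/k))
  refine h4.congr_deriv (Eq.symm ?_)
  rw [div_eq_iff hs0.ne']
  change Real.sin θ = -(1/k) * ((k * -Real.sin θ + -(k^2*(2*Real.sin θ*Real.cos θ))/(2*s)) /
    (k*Real.cos θ + s)) * s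
  have hk0' := hk0.ne'
  have hs0' := hs0.ne'
  have harg' := harg.ne'
  field_simp
  ring

/-- The key identity. -/
lemma ellipticK_eq {k : ℝ} (hk0 : 0 < k) (hk1 : k < 1) :
    ellipticK k = (∫ θ in (0:ℝ)..(Real.pi/2),
        (1 - Real.sin θ) / Real.sqrt (1 - k ^ 2 * Real.sin θ ^ 2))
      + (1/k) * Real.log ((1 + k) / Real.sqrt (1 - k ^ 2)) := by
  have hin := inner_pos hk0 hk1
  have hcont : Continuous (fun θ : ℝ => Real.sqrt (1 - k ^ 2 * Real.sin θ ^ 2)) :=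
    (cont_inner k).sqrt
  have hne : ∀ θ : ℝ, Real.sqrt (1 - k ^ 2 * Real.sin θ ^ 2) ≠ 0 :=
    fun θ => (Real.sqrt_pos.2 (hin θ)).ne'
  have hc2 : Continuous (fun θ : ℝ => Real.sin θ / Real.sqrt (1 - k ^ 2 * Real.sin θ ^ 2)) :=
    Real.continuous_sin.div hcont hne
  have hc3 : Continuous (fun θ : ℝ =>
      (1 - Real.sin θ) / Real.sqrt (1 - k ^ 2 * Real.sin θ ^ 2)) :=
    (continuous_const.sub Real.continuous_sin).div hcont hne
  have hk2 : (0:ℝ) < 1 - k ^ 2 := by nlinarith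
  have hFTC : (∫ θ in (0:ℝ)..(Real.pi/2), Real.sin θ / Real.sqrt (1 - k ^ 2 * Real.sin θ ^ 2))
      = (1/k) * Real.log ((1 + k) / Real.sqrt (1 - k ^ 2)) := by
    rw [intervalIntegral.integral_eq_sub_of_hasDerivAt
      (f := fun θ : ℝ => -(1/k) * Real.log (k * Real.cos θ +
        Real.sqrt (1 - k ^ 2 * Real.sin θ ^ 2)))
      (fun θ hθ => by
        refine hasDerivAt_anti hk0 hk1 θ ?_
        rw [Set.uIcc_of_le (by positivity)] at hθ
        exact Real.cos_nonneg_of_mem_Icc ⟨by linarith [hθ.1, Real.pi_pos], hθ.2⟩)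
      ((hc2.intervalIntegrable _ _))]
    simp only [Real.sin_pi_div_two, Real.cos_pi_div_two, Real.sin_zero, Real.cos_zero]
    rw [Real.log_div (by positivity) (Real.sqrt_ne_zero'.2 hk2)]
    norm_num
    ring
  rw [ellipticK, ← hFTC,
    ← intervalIntegral.integral_add (hc3.intervalIntegrable _ _) (hc2.intervalIntegrable _ _)]
  refine intervalIntegral.integral_congr fun θ _ => ?_
  rw [← add_div]
  norm_num

lemma limit_integral :
    (∫ θ in (0:ℝ)..(Real.pi/2), (1 - Real.sin θ) / Real.sqrt (1 - Real.sin θ ^ 2))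
      = Real.log 2 := by
  have hcong : ∀ θ ∈ Set.uIcc (0:ℝ) (Real.pi/2),
      (1 - Real.sin θ) / Real.sqrt (1 - Real.sin θ ^ 2)
        = Real.cos θ / (1 + Real.sin θ) := by
    intro θ hθ
    rw [Set.uIcc_of_le (by positivity)] at hθ
    have hc : 0 ≤ Real.cos θ :=
      Real.cos_nonneg_of_mem_Icc ⟨by linarith [hθ.1, Real.pi_pos], hθ.2⟩
    have hs0 : 0 ≤ Real.sin θ := Real.sin_nonneg_of_mem_Icc ⟨hθ.1, by linarith [hθ.2, Real.pi_pos]⟩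
    have hsq : Real.cos θ ^ 2 = 1 - Real.sin θ ^ 2 := Real.cos_sq' θ
    rw [← hsq, Real.sqrt_sq hc]
    rcases eq_or_lt_of_le hc with h0 | h0
    · have hs1 : Real.sin θ = 1 := by nlinarith [Real.sin_sq_add_cos_sq θ]
      simp [← h0, hs1]
    · rw [div_eq_div_iff h0.ne' (by linarith : (0:ℝ) < 1 + Real.sin θ).ne']
      nlinarith
  rw [intervalIntegral.integral_congr hcong,
    intervalIntegral.integral_eq_sub_of_hasDerivAt
      (f := fun θ : ℝ => Real.log (1 + Real.sin θ))
      (fun θ hθ => by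
        rw [Set.uIcc_of_le (by positivity)] at hθ
        have hs0 : 0 ≤ Real.sin θ :=
          Real.sin_nonneg_of_mem_Icc ⟨hθ.1, by linarith [hθ.2, Real.pi_pos]⟩
        simpa using ((Real.hasDerivAt_sin θ).const_add 1).log (by linarith))
      (by
        refine (ContinuousOn.div Real.continuous_cos.continuousOn
          (continuous_const.add Real.continuous_sin).continuousOn ?_).intervalIntegrable
        intro θ hθ
        rw [Set.uIcc_of_le (by positivity)] at hθ
        have := Real.sin_nonneg_of_mem_Icc ⟨hθ.1, by linarith [hθ.2, Real.pi_pos]⟩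
        intro h; simp only [Pi.add_apply] at h; linarith)]
  norm_num

lemma tendsto_integral :
    Tendsto (fun k : ℝ => ∫ θ in (0:ℝ)..(Real.pi/2),
        (1 - Real.sin θ) / Real.sqrt (1 - k ^ 2 * Real.sin θ ^ 2))
      (nhdsWithin 1 (Set.Iio 1)) (nhds (Real.log 2)) := by
  rw [← limit_integral]
  apply intervalIntegral.tendsto_integral_filter_of_dominated_convergence (bound := fun _ => 1)
  · filter_upwards with k
    refine Measurable.aestronglyMeasurable ?_
    exact (measurable_const.sub Real.measurable_sin).div ((cont_inner k).sqrt.measurable)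
  · filter_upwards [Ioo_mem_nhdsLT_of_mem
      (Set.mem_Ioc.2 ⟨(by norm_num : (0:ℝ) < 1), le_rfl⟩)] with k hk
    filter_upwards with θ hθ
    rw [Set.uIoc_of_le (by positivity)] at hθ
    have hs0 : 0 ≤ Real.sin θ :=
      Real.sin_nonneg_of_mem_Icc ⟨hθ.1.le, by linarith [hθ.2, Real.pi_pos]⟩
    have hs1 : Real.sin θ ≤ 1 := Real.sin_le_one θ
    have hin := inner_pos hk.1 hk.2 θ
    have hsq : 0 < Real.sqrt (1 - k ^ 2 * Real.sin θ ^ 2) := Real.sqrt_pos.2 hin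
    rw [Real.norm_eq_abs, abs_of_nonneg (div_nonneg (by linarith) hsq.le), div_le_one hsq]
    have hss : Real.sin θ ^ 2 ≤ Real.sin θ := by nlinarith
    have hk2 : k ^ 2 ≤ 1 := by nlinarith [hk.1, hk.2]
    have hks : k ^ 2 * Real.sin θ ^ 2 ≤ Real.sin θ := by
      nlinarith [mul_le_mul_of_nonneg_right hk2 (sq_nonneg (Real.sin θ))]
    have h1 : (1 - Real.sin θ) ^ 2 ≤ 1 - k ^ 2 * Real.sin θ ^ 2 := by nlinarith
    calc 1 - Real.sin θ = Real.sqrt ((1 - Real.sin θ) ^ 2) := by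
          rw [Real.sqrt_sq (by linarith)]
      _ ≤ _ := Real.sqrt_le_sqrt h1
  · exact intervalIntegrable_const
  · filter_upwards with θ hθ
    rw [Set.uIoc_of_le (by positivity)] at hθ
    rcases eq_or_lt_of_le (Real.sin_le_one θ) with h1 | h1
    · simp [h1]
    · have hs0 : 0 ≤ Real.sin θ :=
        Real.sin_nonneg_of_mem_Icc ⟨hθ.1.le, by linarith [hθ.2, Real.pi_pos]⟩
      have hpos : 0 < 1 - Real.sin θ ^ 2 := by nlinarith
      refine Tendsto.div tendsto_const_nhds ?_ (Real.sqrt_pos.2 hpos).ne'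
      have hT : Tendsto (fun k : ℝ => 1 - k ^ 2 * Real.sin θ ^ 2) (nhdsWithin 1 (Set.Iio 1))
          (nhds (1 - Real.sin θ ^ 2)) := by
        have h := Continuous.tendsto
          (show Continuous fun k : ℝ => 1 - k ^ 2 * Real.sin θ ^ 2 by continuity) 1
        simpa using h.mono_left nhdsWithin_le_nhds
      exact hT.sqrt

lemma tendsto_remainder :
    Tendsto (fun k : ℝ => (1/k) * Real.log ((1 + k) / Real.sqrt (1 - k ^ 2))
        - Real.log (4 / Real.sqrt (1 - k ^ 2)))
      (nhdsWithin 1 (Set.Iio 1)) (nhds (-(Real.log 2))) := by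
  have hmem : Set.Ioo (0:ℝ) 1 ∈ nhdsWithin (1:ℝ) (Set.Iio 1) :=
    Ioo_mem_nhdsLT_of_mem (Set.mem_Ioc.2 ⟨by norm_num, le_rfl⟩)
  have T1 : Tendsto (fun k : ℝ => (1/k) * Real.log (1+k)) (nhdsWithin 1 (Set.Iio 1))
      (nhds (Real.log 2)) := by
    have h : ContinuousAt (fun k : ℝ => (1/k) * Real.log (1+k)) 1 := by
      have h1 : ContinuousAt (fun k : ℝ => 1/k) 1 :=
        ContinuousAt.div continuousAt_const continuousAt_id one_ne_zero
      have h2 : ContinuousAt (fun k : ℝ => Real.log (1+k)) 1 :=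
        (Real.continuousAt_log (by norm_num)).comp (continuousAt_const.add continuousAt_id)
      exact h1.mul h2
    have h3 := h.tendsto.mono_left (nhdsWithin_le_nhds (s := Set.Iio 1))
    rw [show (1:ℝ)/1 * Real.log (1+1) = Real.log 2 by norm_num] at h3
    exact h3
  have base : Tendsto (fun x : ℝ => Real.log x * x) (nhdsWithin 0 (Set.Ioi 0)) (nhds 0) := by
    simpa using tendsto_log_mul_rpow_nhdsGT_zero zero_lt_one
  have comp : Tendsto (fun k : ℝ => 1 - k) (nhdsWithin 1 (Set.Iio 1))
      (nhdsWithin 0 (Set.Ioi 0)) := by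
    refine tendsto_nhdsWithin_iff.mpr ⟨?_, ?_⟩
    · have h := Continuous.tendsto (show Continuous fun k : ℝ => 1 - k by continuity) 1
      simpa using h.mono_left nhdsWithin_le_nhds
    · filter_upwards [self_mem_nhdsWithin] with k hk
      exact Set.mem_Ioi.2 (sub_pos.2 hk)
  have main : Tendsto (fun k : ℝ => Real.log (1-k) * (1-k)) (nhdsWithin 1 (Set.Iio 1))
      (nhds 0) := base.comp comp
  have factor : Tendsto (fun k : ℝ => -(1/(2*k))) (nhdsWithin 1 (Set.Iio 1))
      (nhds (-(1/2))) := by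
    have h : ContinuousAt (fun k : ℝ => -(1/(2*k))) 1 := by
      refine ContinuousAt.neg (ContinuousAt.div continuousAt_const ?_ (by norm_num))
      exact continuousAt_const.mul continuousAt_id
    have h3 := h.tendsto.mono_left (nhdsWithin_le_nhds (s := Set.Iio 1))
    rw [show -(1/(2*(1:ℝ))) = -(1/2) by norm_num] at h3
    exact h3
  have part1 : Tendsto (fun k : ℝ => Real.log (1-k) * (1-k) * (-(1/(2*k))))
      (nhdsWithin 1 (Set.Iio 1)) (nhds 0) := by
    simpa using main.mul factor
  have part2 : Tendsto (fun k : ℝ => ((k-1)/k) * ((1/2) * Real.log (1+k)))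
      (nhdsWithin 1 (Set.Iio 1)) (nhds 0) := by
    have h : ContinuousAt (fun k : ℝ => ((k-1)/k) * ((1/2) * Real.log (1+k))) 1 := by
      refine ContinuousAt.mul (ContinuousAt.div ?_ continuousAt_id one_ne_zero) ?_
      · exact continuousAt_id.sub continuousAt_const
      · exact continuousAt_const.mul
          ((Real.continuousAt_log (by norm_num)).comp (continuousAt_const.add continuousAt_id))
    have h3 := h.tendsto.mono_left (nhdsWithin_le_nhds (s := Set.Iio 1))
    rw [show ((1:ℝ)-1)/1 * (1/2 * Real.log (1+1)) = 0 by norm_num] at h3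
    exact h3
  have T2 : Tendsto (fun k : ℝ => (1 - 1/k) * Real.log (Real.sqrt (1 - k ^ 2)))
      (nhdsWithin 1 (Set.Iio 1)) (nhds 0) := by
    have hsum := part1.add part2
    rw [add_zero] at hsum
    refine hsum.congr' ?_
    filter_upwards [hmem] with k hk
    have h1k : (0:ℝ) < 1 - k := by linarith [hk.2]
    have h2k : (0:ℝ) < 1 + k := by linarith [hk.1]
    have hfac : 1 - k ^ 2 = (1 - k) * (1 + k) := by ring
    have hk0 : k ≠ 0 := ne_of_gt hk.1
    rw [Real.log_sqrt (by nlinarith), hfac, Real.log_mul h1k.ne' h2k.ne']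
    field_simp
    ring
  have hfin := (T1.add T2).sub (tendsto_const_nhds (x := Real.log 4)
    (f := nhdsWithin (1:ℝ) (Set.Iio 1)))
  have hval : Real.log 2 + 0 - Real.log 4 = -(Real.log 2) := by
    rw [show (4:ℝ) = 2 ^ 2 by norm_num, Real.log_pow]
    push_cast; ring
  rw [hval] at hfin
  refine hfin.congr' ?_
  filter_upwards [hmem] with k hk
  have h2k : (0:ℝ) < 1 + k := by linarith [hk.1]
  have hs : (0:ℝ) < Real.sqrt (1 - k ^ 2) := Real.sqrt_pos.2 (by nlinarith [hk.1, hk.2])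
  rw [Real.log_div h2k.ne' hs.ne', Real.log_div (by norm_num : (4:ℝ) ≠ 0) hs.ne']
  ring

end EllipticAux

/-- `K(k) − log(4/√(1 − k²)) → 0` as `k → 1⁻`. -/
theorem stmt_9 :
    Tendsto (fun k : ℝ => ellipticK k - Real.log (4 / Real.sqrt (1 - k ^ 2)))
      (nhdsWithin 1 (Set.Iio 1)) (nhds 0) := by
  have h := EllipticAux.tendsto_integral.add EllipticAux.tendsto_remainder
  rw [add_neg_cancel] at h
  refine h.congr' ?_
  filter_upwards [Ioo_mem_nhdsLT_of_mem (Set.mem_Ioc.2 ⟨(by norm_num : (0:ℝ) < 1), le_rfl⟩)]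
    with k hk
  rw [EllipticAux.ellipticK_eq hk.1 hk.2]
  ring
end

section
/- Let C > 0 and let g, h : ℝ → ℂ be continuous functions satisfying |g(x)| ≤ C·e^{−eˣ}·e^{−x/2} and |h(x)| ≤ C·e^{eˣ}·e^{−x/2} for all x ∈ ℝ. Define f₀ = g and, recursively, f_{n+1}(x) = ∫ₓ^∞ (h(x)g(y) − g(x)h(y))·e^{−2y}·f_n(y) dy. Then for every n ≥ 0, the integral defining f_{n+1} converges absolutely for every x ∈ ℝ, and |f_n(x)| ≤ (2ⁿ·C^{2n+1}/(3ⁿ·n!))·e^{−eˣ}·e^{−(6n+1)x/2} for all x ∈ ℝ. -/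
open Real MeasureTheory

lemma exp_int_aux (a b : ℝ) (hb : 0 < b) :
    ∫ y in Set.Ioi a, Real.exp (-b * y) = Real.exp (-b * a) / b := by
  have hderiv : ∀ x ∈ Set.Ici a,
      HasDerivAt (fun y => -Real.exp (-b * y) / b) (Real.exp (-b * x)) x := by
    intro x _
    have h1 : HasDerivAt (fun y : ℝ => -b * y) (-b) x := by
      simpa using (hasDerivAt_id x).const_mul (-b)
    have h2 := (h1.exp.div_const b).neg
    refine ((h2.congr_of_eventuallyEq (Filter.Eventually.of_forall fun y => ?_)).congr_deriv ?_)
    · show -Real.exp (-b * y) / b = -(Real.exp (-b * y) / b); ring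
    · rw [mul_neg, neg_div, neg_neg, mul_div_assoc, div_self hb.ne', mul_one]
  have htend : Filter.Tendsto (fun y => -Real.exp (-b * y) / b) Filter.atTop (nhds 0) := by
    have h1 : Filter.Tendsto (fun y : ℝ => -b * y) Filter.atTop Filter.atBot := by
      exact Filter.Tendsto.const_mul_atTop_of_neg (neg_neg_iff_pos.2 hb) Filter.tendsto_id
    have := (Real.tendsto_exp_atBot.comp h1).neg.div_const b
    simpa using this
  have := integral_Ioi_of_hasDerivAt_of_tendsto' hderiv (exp_neg_integrableOn_Ioi a hb) htend
  rw [this]; ring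

lemma cont_tail_integral (u : ℝ → ℂ) (hu : Continuous u)
    (hint : ∀ a : ℝ, IntegrableOn u (Set.Ioi a)) :
    Continuous (fun x => ∫ y in Set.Ioi x, u y) := by
  have key : ∀ x : ℝ, ∫ y in Set.Ioi x, u y
      = (∫ t in x..(0:ℝ), u t) + ∫ y in Set.Ioi (0:ℝ), u y := by
    intro x
    rcases le_total x 0 with hx | hx
    · rw [intervalIntegral.integral_of_le hx,
        ← MeasureTheory.setIntegral_union (Set.Ioc_disjoint_Ioi le_rfl) measurableSet_Ioi
          ((hint x).mono_set Set.Ioc_subset_Ioi_self) (hint 0),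
        Set.Ioc_union_Ioi_eq_Ioi hx]
    · have h2 := MeasureTheory.setIntegral_union (Set.Ioc_disjoint_Ioi le_rfl) measurableSet_Ioi
        ((hint 0).mono_set Set.Ioc_subset_Ioi_self) (hint x)
      rw [Set.Ioc_union_Ioi_eq_Ioi hx] at h2
      rw [intervalIntegral.integral_symm, intervalIntegral.integral_of_le hx, h2]
      ring
  rw [show (fun x => ∫ y in Set.Ioi x, u y)
      = fun x => (∫ t in x..(0:ℝ), u t) + ∫ y in Set.Ioi (0:ℝ), u y from funext key]
  refine Continuous.add ?_ continuous_const
  have hc : Continuous fun x => ∫ t in (0:ℝ)..x, u t :=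
    intervalIntegral.continuous_primitive (fun a b => hu.intervalIntegrable a b) 0
  have : (fun x => ∫ t in x..(0:ℝ), u t) = fun x => -∫ t in (0:ℝ)..x, u t := by
    funext x; rw [intervalIntegral.integral_symm]
  rw [this]
  exact hc.neg

set_option maxHeartbeats 800000 in
/-- Bounds on the successive approximations for the Volterra integral equation:
if `|g(x)| ≤ C e^{−eˣ} e^{−x/2}` and `|h(x)| ≤ C e^{eˣ} e^{−x/2}`, then the
iterates `f_{n+1}(x) = ∫ₓ^∞ (h(x)g(y) − g(x)h(y)) e^{−2y} f_n(y) dy` are given by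
absolutely convergent integrals and satisfy
`|f_n(x)| ≤ (2ⁿ C^{2n+1} / (3ⁿ n!)) e^{−eˣ} e^{−(6n+1)x/2}`. -/
theorem stmt_12 (C : ℝ) (hC : 0 < C) (g h : ℝ → ℂ)
    (hg_cont : Continuous g) (hh_cont : Continuous h)
    (hg : ∀ x : ℝ, ‖g x‖ ≤ C * Real.exp (-Real.exp x) * Real.exp (-x / 2))
    (hh : ∀ x : ℝ, ‖h x‖ ≤ C * Real.exp (Real.exp x) * Real.exp (-x / 2))
    (f : ℕ → ℝ → ℂ) (hf0 : f 0 = g)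
    (hf : ∀ n : ℕ, ∀ x : ℝ,
      f (n + 1) x =
        ∫ y in Set.Ioi x, (h x * g y - g x * h y) * Real.exp (-2 * y) * f n y) :
    ∀ n : ℕ,
      (∀ x : ℝ,
        IntegrableOn (fun y => (h x * g y - g x * h y) * Real.exp (-2 * y) * f n y)
          (Set.Ioi x)) ∧
      (∀ x : ℝ,
        ‖f n x‖ ≤ 2 ^ n * C ^ (2 * n + 1) / (3 ^ n * n.factorial)
          * Real.exp (-Real.exp x) * Real.exp (-(6 * n + 1) * x / 2)) := by
  set B : ℕ → ℝ := fun n => 2 ^ n * C ^ (2 * n + 1) / (3 ^ n * n.factorial) with hBdef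
  have hBpos : ∀ n, 0 < B n := by
    intro n
    have : (0:ℝ) < n.factorial := by exact_mod_cast n.factorial_pos
    positivity
  -- bound on the cross term
  have cross : ∀ x y : ℝ, x ≤ y → ‖h x * g y - g x * h y‖ ≤
      2 * C ^ 2 * Real.exp (-Real.exp x) * Real.exp (Real.exp y)
        * Real.exp (-x / 2) * Real.exp (-y / 2) := by
    intro x y hxy
    have h1 : Real.exp (Real.exp x) * Real.exp (-Real.exp y)
        ≤ Real.exp (-Real.exp x) * Real.exp (Real.exp y) := by
      rw [← Real.exp_add, ← Real.exp_add]
      have : Real.exp x ≤ Real.exp y := Real.exp_le_exp.2 hxy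
      apply Real.exp_le_exp.2; linarith
    calc ‖h x * g y - g x * h y‖ ≤ ‖h x‖ * ‖g y‖ + ‖g x‖ * ‖h y‖ := by
          refine (norm_sub_le _ _).trans ?_
          rw [norm_mul, norm_mul]
      _ ≤ (C * Real.exp (Real.exp x) * Real.exp (-x / 2))
            * (C * Real.exp (-Real.exp y) * Real.exp (-y / 2))
          + (C * Real.exp (-Real.exp x) * Real.exp (-x / 2))
            * (C * Real.exp (Real.exp y) * Real.exp (-y / 2)) := by
          have a1 := mul_le_mul (hh x) (hg y) (norm_nonneg _)
            (by positivity : (0:ℝ) ≤ C * Real.exp (Real.exp x) * Real.exp (-x / 2))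
          have a2 := mul_le_mul (hg x) (hh y) (norm_nonneg _)
            (by positivity : (0:ℝ) ≤ C * Real.exp (-Real.exp x) * Real.exp (-x / 2))
          exact add_le_add a1 a2
      _ = (Real.exp (Real.exp x) * Real.exp (-Real.exp y))
            * (C ^ 2 * Real.exp (-x / 2) * Real.exp (-y / 2))
          + (Real.exp (-Real.exp x) * Real.exp (Real.exp y))
            * (C ^ 2 * Real.exp (-x / 2) * Real.exp (-y / 2)) := by ring
      _ ≤ (Real.exp (-Real.exp x) * Real.exp (Real.exp y))
            * (C ^ 2 * Real.exp (-x / 2) * Real.exp (-y / 2))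
          + (Real.exp (-Real.exp x) * Real.exp (Real.exp y))
            * (C ^ 2 * Real.exp (-x / 2) * Real.exp (-y / 2)) :=
          add_le_add (mul_le_mul_of_nonneg_right h1 (by positivity)) le_rfl
      _ = 2 * C ^ 2 * Real.exp (-Real.exp x) * Real.exp (Real.exp y)
            * Real.exp (-x / 2) * Real.exp (-y / 2) := by ring
  -- step lemma
  have step : ∀ n : ℕ, Continuous (f n) →
      (∀ y : ℝ, ‖f n y‖ ≤ B n * Real.exp (-Real.exp y) * Real.exp (-(6 * n + 1) * y / 2)) →
      (∀ x : ℝ, IntegrableOn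
          (fun y => (h x * g y - g x * h y) * Real.exp (-2 * y) * f n y) (Set.Ioi x)) ∧
      Continuous (f (n + 1)) ∧
      (∀ x : ℝ, ‖f (n + 1) x‖ ≤
        B (n + 1) * Real.exp (-Real.exp x) * Real.exp (-(6 * (n + 1) + 1) * x / 2)) := by
    intro n hfc hfb
    have h3pos : (0:ℝ) < 3 * (n : ℝ) + 3 := by positivity
    -- pointwise bound on integrand
    have ptbd : ∀ x y : ℝ, x ≤ y →
        ‖(h x * g y - g x * h y) * (Real.exp (-2 * y) : ℂ) * f n y‖ ≤
          (2 * C ^ 2 * B n * Real.exp (-Real.exp x) * Real.exp (-x / 2))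
            * Real.exp (-(3 * (n : ℝ) + 3) * y) := by
      intro x y hxy
      have e1 : Real.exp (Real.exp y) * Real.exp (-Real.exp y) = 1 := by
        rw [← Real.exp_add]; simp
      have e2 : Real.exp (-y / 2) * Real.exp (-2 * y) * Real.exp (-(6 * (n:ℝ) + 1) * y / 2)
          = Real.exp (-(3 * (n:ℝ) + 3) * y) := by
        rw [← Real.exp_add, ← Real.exp_add]; congr 1; ring
      have hnorm : ‖(h x * g y - g x * h y) * (Real.exp (-2 * y) : ℂ) * f n y‖
          = ‖h x * g y - g x * h y‖ * Real.exp (-2 * y) * ‖f n y‖ := by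
        rw [norm_mul, norm_mul, Complex.norm_real, Real.norm_eq_abs, Real.abs_exp]
      rw [hnorm]
      calc ‖h x * g y - g x * h y‖ * Real.exp (-2 * y) * ‖f n y‖
          ≤ (2 * C ^ 2 * Real.exp (-Real.exp x) * Real.exp (Real.exp y)
              * Real.exp (-x / 2) * Real.exp (-y / 2)) * Real.exp (-2 * y)
            * (B n * Real.exp (-Real.exp y) * Real.exp (-(6 * n + 1) * y / 2)) := by
            gcongr
            · exact cross x y hxy
            · exact hfb y
        _ = (2 * C ^ 2 * B n * Real.exp (-Real.exp x) * Real.exp (-x / 2))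
              * ((Real.exp (Real.exp y) * Real.exp (-Real.exp y))
                * (Real.exp (-y / 2) * Real.exp (-2 * y)
                  * Real.exp (-(6 * (n:ℝ) + 1) * y / 2))) := by ring
        _ = (2 * C ^ 2 * B n * Real.exp (-Real.exp x) * Real.exp (-x / 2))
              * Real.exp (-(3 * (n : ℝ) + 3) * y) := by rw [e1, e2, one_mul]
    -- integrability of the integrand
    have hint : ∀ x : ℝ, IntegrableOn
        (fun y => (h x * g y - g x * h y) * (Real.exp (-2 * y) : ℂ) * f n y) (Set.Ioi x) := by
      intro x
      have hmaj : IntegrableOn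
          (fun y => (2 * C ^ 2 * B n * Real.exp (-Real.exp x) * Real.exp (-x / 2))
            * Real.exp (-(3 * (n : ℝ) + 3) * y)) (Set.Ioi x) :=
        (exp_neg_integrableOn_Ioi x h3pos).const_mul _
      have hmeas : Continuous
          (fun y => (h x * g y - g x * h y) * (Real.exp (-2 * y) : ℂ) * f n y) := by
        apply Continuous.mul
        apply Continuous.mul
        · exact (continuous_const.mul hg_cont).sub (continuous_const.mul hh_cont)
        · exact Complex.continuous_ofReal.comp (by continuity)
        · exact hfc
      refine MeasureTheory.Integrable.mono hmaj hmeas.aestronglyMeasurable ?_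
      refine (MeasureTheory.ae_restrict_iff' measurableSet_Ioi).2 (Filter.Eventually.of_forall ?_)
      intro y hy
      have := ptbd x y (le_of_lt hy)
      refine this.trans (le_of_eq ?_)
      rw [Real.norm_eq_abs, abs_of_nonneg (by positivity)]
    -- bound on f (n+1)
    have hbd : ∀ x : ℝ, ‖f (n + 1) x‖ ≤
        B (n + 1) * Real.exp (-Real.exp x) * Real.exp (-(6 * ((n:ℝ) + 1) + 1) * x / 2) := by
      intro x
      rw [hf n x]
      have hmaj : Integrable
          (fun y => (2 * C ^ 2 * B n * Real.exp (-Real.exp x) * Real.exp (-x / 2))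
            * Real.exp (-(3 * (n : ℝ) + 3) * y)) (volume.restrict (Set.Ioi x)) :=
        (exp_neg_integrableOn_Ioi x h3pos).const_mul _
      have h1 : ‖∫ y in Set.Ioi x, (h x * g y - g x * h y) * (Real.exp (-2 * y) : ℂ) * f n y‖
          ≤ ∫ y in Set.Ioi x, (2 * C ^ 2 * B n * Real.exp (-Real.exp x) * Real.exp (-x / 2))
              * Real.exp (-(3 * (n : ℝ) + 3) * y) := by
        refine MeasureTheory.norm_integral_le_of_norm_le hmaj ?_
        refine (MeasureTheory.ae_restrict_iff' measurableSet_Ioi).2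
          (Filter.Eventually.of_forall ?_)
        exact fun y hy => ptbd x y (le_of_lt hy)
      refine h1.trans ?_
      rw [MeasureTheory.integral_const_mul, exp_int_aux x _ h3pos]
      apply le_of_eq
      have hfact : ((n + 1).factorial : ℝ) = ((n:ℝ) + 1) * n.factorial := by
        rw [Nat.factorial_succ]; push_cast; ring
      have hBn1 : B (n + 1) = 2 * C ^ 2 * B n / (3 * ((n:ℝ) + 1)) := by
        rw [hBdef]
        simp only
        rw [hfact]
        have hnf : ((n.factorial : ℝ)) ≠ 0 := by
          exact_mod_cast n.factorial_pos.ne'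
        field_simp
        ring
      have eexp : Real.exp (-x / 2) * Real.exp (-(3 * (n:ℝ) + 3) * x)
          = Real.exp (-(6 * ((n:ℝ) + 1) + 1) * x / 2) := by
        rw [← Real.exp_add]; congr 1; ring
      have hne : (3 * ((n:ℝ) + 1)) ≠ 0 := by positivity
      calc 2 * C ^ 2 * B n * Real.exp (-Real.exp x) * Real.exp (-x / 2)
            * (Real.exp (-(3 * (n:ℝ) + 3) * x) / (3 * (n:ℝ) + 3))
          = (2 * C ^ 2 * B n / (3 * ((n:ℝ) + 1))) * Real.exp (-Real.exp x)
            * (Real.exp (-x / 2) * Real.exp (-(3 * (n:ℝ) + 3) * x)) := by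
            field_simp
        _ = B (n + 1) * Real.exp (-Real.exp x)
            * Real.exp (-(6 * ((n:ℝ) + 1) + 1) * x / 2) := by rw [eexp, hBn1]
    -- continuity of f (n + 1)
    have hexp1 : ∀ t : ℝ, Real.exp (-Real.exp t) ≤ 1 := fun t =>
      Real.exp_le_one_iff.2 (neg_nonpos.2 (Real.exp_pos t).le)
    have e2 : ∀ y : ℝ, Real.exp (-y / 2) * Real.exp (-2 * y)
        * Real.exp (-(6 * (n:ℝ) + 1) * y / 2) = Real.exp (-(3 * (n:ℝ) + 3) * y) := by
      intro y
      rw [← Real.exp_add, ← Real.exp_add]; congr 1; ring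
    have hu1b : ∀ y : ℝ, ‖g y * (Real.exp (-2 * y) : ℂ) * f n y‖
        ≤ (C * B n) * Real.exp (-(3 * (n:ℝ) + 3) * y) := by
      intro y
      have hn1 : ‖g y * (Real.exp (-2 * y) : ℂ) * f n y‖
          = ‖g y‖ * Real.exp (-2 * y) * ‖f n y‖ := by
        rw [norm_mul, norm_mul, Complex.norm_real, Real.norm_eq_abs, Real.abs_exp]
      rw [hn1]
      calc ‖g y‖ * Real.exp (-2 * y) * ‖f n y‖
          ≤ (C * Real.exp (-Real.exp y) * Real.exp (-y / 2)) * Real.exp (-2 * y)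
            * (B n * Real.exp (-Real.exp y) * Real.exp (-(6 * n + 1) * y / 2)) :=
            mul_le_mul (mul_le_mul_of_nonneg_right (hg y) (Real.exp_pos _).le) (hfb y)
              (norm_nonneg _) (by positivity)
        _ = (Real.exp (-Real.exp y) * Real.exp (-Real.exp y)) * ((C * B n)
            * (Real.exp (-y / 2) * Real.exp (-2 * y)
              * Real.exp (-(6 * (n:ℝ) + 1) * y / 2))) := by ring
        _ ≤ (1 * 1) * ((C * B n) * (Real.exp (-y / 2) * Real.exp (-2 * y)
              * Real.exp (-(6 * (n:ℝ) + 1) * y / 2))) := by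
            apply mul_le_mul_of_nonneg_right (mul_le_mul (hexp1 y) (hexp1 y)
              (Real.exp_pos _).le zero_le_one)
            positivity
        _ = (C * B n) * Real.exp (-(3 * (n:ℝ) + 3) * y) := by rw [e2, one_mul, one_mul]
    have hu2b : ∀ y : ℝ, ‖h y * (Real.exp (-2 * y) : ℂ) * f n y‖
        ≤ (C * B n) * Real.exp (-(3 * (n:ℝ) + 3) * y) := by
      intro y
      have hn1 : ‖h y * (Real.exp (-2 * y) : ℂ) * f n y‖
          = ‖h y‖ * Real.exp (-2 * y) * ‖f n y‖ := by
        rw [norm_mul, norm_mul, Complex.norm_real, Real.norm_eq_abs, Real.abs_exp]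
      rw [hn1]
      have eey : Real.exp (Real.exp y) * Real.exp (-Real.exp y) = 1 := by
        rw [← Real.exp_add]; simp
      calc ‖h y‖ * Real.exp (-2 * y) * ‖f n y‖
          ≤ (C * Real.exp (Real.exp y) * Real.exp (-y / 2)) * Real.exp (-2 * y)
            * (B n * Real.exp (-Real.exp y) * Real.exp (-(6 * n + 1) * y / 2)) :=
            mul_le_mul (mul_le_mul_of_nonneg_right (hh y) (Real.exp_pos _).le) (hfb y)
              (norm_nonneg _) (by positivity)
        _ = (Real.exp (Real.exp y) * Real.exp (-Real.exp y)) * ((C * B n)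
            * (Real.exp (-y / 2) * Real.exp (-2 * y)
              * Real.exp (-(6 * (n:ℝ) + 1) * y / 2))) := by ring
        _ = (C * B n) * Real.exp (-(3 * (n:ℝ) + 3) * y) := by rw [e2, eey, one_mul]
    have hu1c : Continuous (fun y => g y * (Real.exp (-2 * y) : ℂ) * f n y) := by
      apply Continuous.mul
      apply Continuous.mul hg_cont
      · exact Complex.continuous_ofReal.comp (by continuity)
      · exact hfc
    have hu2c : Continuous (fun y => h y * (Real.exp (-2 * y) : ℂ) * f n y) := by
      apply Continuous.mul
      apply Continuous.mul hh_cont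
      · exact Complex.continuous_ofReal.comp (by continuity)
      · exact hfc
    have hmaj' : ∀ a : ℝ, IntegrableOn
        (fun y => (C * B n) * Real.exp (-(3 * (n:ℝ) + 3) * y)) (Set.Ioi a) := fun a =>
      (exp_neg_integrableOn_Ioi a h3pos).const_mul _
    have hu1i : ∀ a : ℝ, IntegrableOn
        (fun y => g y * (Real.exp (-2 * y) : ℂ) * f n y) (Set.Ioi a) := by
      intro a
      refine MeasureTheory.Integrable.mono (hmaj' a) hu1c.aestronglyMeasurable ?_
      refine Filter.Eventually.of_forall fun y => (hu1b y).trans (le_of_eq ?_)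
      rw [Real.norm_eq_abs, abs_of_nonneg (by positivity)]
    have hu2i : ∀ a : ℝ, IntegrableOn
        (fun y => h y * (Real.exp (-2 * y) : ℂ) * f n y) (Set.Ioi a) := by
      intro a
      refine MeasureTheory.Integrable.mono (hmaj' a) hu2c.aestronglyMeasurable ?_
      refine Filter.Eventually.of_forall fun y => (hu2b y).trans (le_of_eq ?_)
      rw [Real.norm_eq_abs, abs_of_nonneg (by positivity)]
    have hrw : ∀ x : ℝ, f (n + 1) x =
        h x * (∫ y in Set.Ioi x, g y * (Real.exp (-2 * y) : ℂ) * f n y)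
        - g x * (∫ y in Set.Ioi x, h y * (Real.exp (-2 * y) : ℂ) * f n y) := by
      intro x
      rw [hf n x]
      rw [show (fun y => (h x * g y - g x * h y) * (Real.exp (-2 * y) : ℂ) * f n y)
          = fun y => h x * (g y * (Real.exp (-2 * y) : ℂ) * f n y)
            - g x * (h y * (Real.exp (-2 * y) : ℂ) * f n y) from funext fun y => by ring]
      rw [MeasureTheory.integral_sub ((hu1i x).const_mul _) ((hu2i x).const_mul _),
        MeasureTheory.integral_const_mul, MeasureTheory.integral_const_mul]
    have hcont1 : Continuous (f (n + 1)) := by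
      rw [show f (n + 1) = fun x =>
          h x * (∫ y in Set.Ioi x, g y * (Real.exp (-2 * y) : ℂ) * f n y)
          - g x * (∫ y in Set.Ioi x, h y * (Real.exp (-2 * y) : ℂ) * f n y)
        from funext hrw]
      exact (hh_cont.mul (cont_tail_integral _ hu1c hu1i)).sub
        (hg_cont.mul (cont_tail_integral _ hu2c hu2i))
    refine ⟨hint, hcont1, ?_⟩
    exact fun x => hbd x
  -- main induction
  have key : ∀ n : ℕ, Continuous (f n) ∧
      (∀ y : ℝ, ‖f n y‖ ≤ B n * Real.exp (-Real.exp y)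
        * Real.exp (-(6 * n + 1) * y / 2)) := by
    intro n
    induction n with
    | zero =>
      refine ⟨by rw [hf0]; exact hg_cont, ?_⟩
      intro y
      rw [hf0]
      refine (hg y).trans (le_of_eq ?_)
      have hB0 : B 0 = C := by
        rw [hBdef]; simp
      rw [hB0]
      norm_num
    | succ n ih =>
      obtain ⟨ihc, ihb⟩ := ih
      obtain ⟨_, hc, hb⟩ := step n ihc ihb
      refine ⟨hc, fun y => ?_⟩
      have h' := hb y
      push_cast at h' ⊢
      exact h'
  intro n
  exact ⟨(step n (key n).1 (key n).2).1, (key n).2⟩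
end

section
/- Let C > 0 and let g, h : ℝ → ℂ be continuous functions satisfying |g(x)| ≤ C·e^{−eˣ}·e^{−x/2} and |h(x)| ≤ C·e^{eˣ}·e^{−x/2} for all x ∈ ℝ. Define f₀ = g and f_{n+1}(x) = ∫ₓ^∞ (h(x)g(y) − g(x)h(y))·e^{−2y}·f_n(y) dy. Then for every x ∈ ℝ the series S(x) = ∑_{n=0}^∞ f_n(x) converges absolutely, and for every x ≥ 0 one has |S(x) − g(x)| ≤ C·(e^{2C²/3} − 1)·e^{−eˣ}·e^{−7x/2}. -/
open Real MeasureTheory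

lemma aux_exp_tsum (r : ℝ) : Real.exp r = ∑' n : ℕ, r ^ n / (n.factorial : ℝ) := by
  rw [Real.exp_eq_exp_ℝ, NormedSpace.exp_eq_tsum_div]

lemma aux_tail (r : ℝ) : ∑' n : ℕ, r ^ (n + 1) / ((n + 1).factorial : ℝ) = Real.exp r - 1 := by
  have hs : Summable (fun n : ℕ => r ^ n / (n.factorial : ℝ)) := Real.summable_pow_div_factorial r
  have h := Summable.tsum_eq_zero_add hs
  rw [aux_exp_tsum r, h]
  simp

lemma aux_int (a : ℝ) {b : ℝ} (hb : 0 < b) :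
    ∫ y in Set.Ioi a, Real.exp (-b * y) = Real.exp (-b * a) / b := by
  have h := MeasureTheory.integral_comp_mul_left_Ioi (fun u => Real.exp (-u)) a hb
  simp only [smul_eq_mul, integral_exp_neg_Ioi] at h
  calc ∫ y in Set.Ioi a, Real.exp (-b * y) = ∫ y in Set.Ioi a, Real.exp (-(b * y)) := by
        simp [neg_mul]
    _ = b⁻¹ * Real.exp (-(b * a)) := h
    _ = Real.exp (-b * a) / b := by rw [neg_mul]; ring

lemma aux_hA (C : ℝ) (hC : 0 < C) (g h : ℝ → ℂ)
    (hg : ∀ x : ℝ, ‖g x‖ ≤ C * Real.exp (-Real.exp x) * Real.exp (-x / 2))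
    (hh : ∀ x : ℝ, ‖h x‖ ≤ C * Real.exp (Real.exp x) * Real.exp (-x / 2))
    (x y : ℝ) (hxy : x < y) :
    ‖h x * g y - g x * h y‖ ≤
          2 * C ^ 2 * Real.exp (Real.exp y - Real.exp x)
            * (Real.exp (-x / 2) * Real.exp (-y / 2)) := by
  have hexy : Real.exp x ≤ Real.exp y := Real.exp_le_exp.mpr hxy.le
  have hE1 : Real.exp (Real.exp x) * Real.exp (-Real.exp y)
      ≤ Real.exp (Real.exp y - Real.exp x) := by
    rw [← Real.exp_add]; exact Real.exp_le_exp.mpr (by linarith)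
  have hE2 : Real.exp (-Real.exp x) * Real.exp (Real.exp y)
      ≤ Real.exp (Real.exp y - Real.exp x) := by
    rw [← Real.exp_add]; exact Real.exp_le_exp.mpr (by linarith)
  calc ‖h x * g y - g x * h y‖ ≤ ‖h x * g y‖ + ‖g x * h y‖ := norm_sub_le _ _
    _ = ‖h x‖ * ‖g y‖ + ‖g x‖ * ‖h y‖ := by rw [norm_mul, norm_mul]
    _ ≤ (C * Real.exp (Real.exp x) * Real.exp (-x / 2))
          * (C * Real.exp (-Real.exp y) * Real.exp (-y / 2))
        + (C * Real.exp (-Real.exp x) * Real.exp (-x / 2))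
          * (C * Real.exp (Real.exp y) * Real.exp (-y / 2)) :=
        add_le_add (mul_le_mul (hh x) (hg y) (norm_nonneg _) (by positivity))
          (mul_le_mul (hg x) (hh y) (norm_nonneg _) (by positivity))
    _ = C ^ 2 * (Real.exp (-x / 2) * Real.exp (-y / 2))
          * (Real.exp (Real.exp x) * Real.exp (-Real.exp y))
        + C ^ 2 * (Real.exp (-x / 2) * Real.exp (-y / 2))
          * (Real.exp (-Real.exp x) * Real.exp (Real.exp y)) := by ring
    _ ≤ C ^ 2 * (Real.exp (-x / 2) * Real.exp (-y / 2))
          * Real.exp (Real.exp y - Real.exp x)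
        + C ^ 2 * (Real.exp (-x / 2) * Real.exp (-y / 2))
          * Real.exp (Real.exp y - Real.exp x) :=
        add_le_add (mul_le_mul_of_nonneg_left hE1 (by positivity))
          (mul_le_mul_of_nonneg_left hE2 (by positivity))
    _ = _ := by ring

lemma aux_bound (C : ℝ) (hC : 0 < C) (g h : ℝ → ℂ)
    (hg : ∀ x : ℝ, ‖g x‖ ≤ C * Real.exp (-Real.exp x) * Real.exp (-x / 2))
    (hh : ∀ x : ℝ, ‖h x‖ ≤ C * Real.exp (Real.exp x) * Real.exp (-x / 2))
    (f : ℕ → ℝ → ℂ) (hf0 : f 0 = g)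
    (hf : ∀ n : ℕ, ∀ x : ℝ,
      f (n + 1) x =
        ∫ y in Set.Ioi x, (h x * g y - g x * h y) * Real.exp (-2 * y) * f n y) :
    ∀ n : ℕ, ∀ x : ℝ, ‖f n x‖ ≤
      C * (2 * C ^ 2 / 3) ^ n / (n.factorial : ℝ) * Real.exp (-Real.exp x)
        * Real.exp (-(6 * (n : ℝ) + 1) * x / 2) := by
  intro n
  induction n with
  | zero =>
    intro x
    have := hg x
    rw [hf0]
    simpa using this
  | succ n ih =>
    intro x
    set Kn : ℝ := C * (2 * C ^ 2 / 3) ^ n / (n.factorial : ℝ) with hKn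
    have hKnpos : 0 < Kn := by positivity
    set D : ℝ := 2 * C ^ 2 * Kn * Real.exp (-Real.exp x) * Real.exp (-x / 2) with hD
    have hb3 : (0:ℝ) < 3 * ((n:ℝ) + 1) := by positivity
    have main : ∀ y ∈ Set.Ioi x,
        ‖(h x * g y - g x * h y) * (Real.exp (-2 * y) : ℝ) * f n y‖ ≤
          D * Real.exp (-(3 * ((n:ℝ) + 1)) * y) := by
      intro y hy
      have hxy : x < y := hy
      have hnorm : ‖(h x * g y - g x * h y) * (Real.exp (-2 * y) : ℝ) * f n y‖
          = ‖h x * g y - g x * h y‖ * Real.exp (-2 * y) * ‖f n y‖ := by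
        rw [norm_mul, norm_mul, Complex.norm_real, Real.norm_eq_abs,
          abs_of_pos (Real.exp_pos _)]
      rw [hnorm]
      calc ‖h x * g y - g x * h y‖ * Real.exp (-2 * y) * ‖f n y‖
          ≤ (2 * C ^ 2 * Real.exp (Real.exp y - Real.exp x)
              * (Real.exp (-x / 2) * Real.exp (-y / 2)))
            * Real.exp (-2 * y)
            * (Kn * Real.exp (-Real.exp y) * Real.exp (-(6 * (n:ℝ) + 1) * y / 2)) :=
            mul_le_mul
              (mul_le_mul_of_nonneg_right (aux_hA C hC g h hg hh x y hxy)
                (Real.exp_pos _).le)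
              (ih y) (norm_nonneg _) (by positivity)
        _ = D * Real.exp (-(3 * ((n:ℝ) + 1)) * y) := by
            rw [hD, show (-(3 * ((n:ℝ) + 1)) * y)
                  = (-y / 2) + (-2 * y) + (-(6 * (n:ℝ) + 1) * y / 2) by ring,
              show (-Real.exp x) = (Real.exp y - Real.exp x) + (-Real.exp y) by ring,
              Real.exp_add, Real.exp_add, Real.exp_add]
            ring
    have hInt : IntegrableOn (fun y => D * Real.exp (-(3 * ((n:ℝ) + 1)) * y))
        (Set.Ioi x) := (exp_neg_integrableOn_Ioi x hb3).const_mul D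
    calc ‖f (n + 1) x‖
        = ‖∫ y in Set.Ioi x, (h x * g y - g x * h y) * (Real.exp (-2 * y) : ℝ) * f n y‖ := by
          rw [hf n x]
      _ ≤ ∫ y in Set.Ioi x,
            ‖(h x * g y - g x * h y) * (Real.exp (-2 * y) : ℝ) * f n y‖ :=
          norm_integral_le_integral_norm _
      _ ≤ ∫ y in Set.Ioi x, D * Real.exp (-(3 * ((n:ℝ) + 1)) * y) := by
          refine integral_mono_of_nonneg ?_ hInt ?_
          · exact Filter.Eventually.of_forall fun y => norm_nonneg _
          · filter_upwards [ae_restrict_mem measurableSet_Ioi] with y hy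
            exact main y hy
      _ = D * (Real.exp (-(3 * ((n:ℝ) + 1)) * x) / (3 * ((n:ℝ) + 1))) := by
          rw [integral_const_mul, aux_int x hb3]
      _ = C * (2 * C ^ 2 / 3) ^ (n + 1) / ((n + 1).factorial : ℝ)
            * Real.exp (-Real.exp x) * Real.exp (-(6 * ((n:ℝ) + 1) + 1) * x / 2) := by
          rw [hD, hKn,
            show (-(6 * ((n:ℝ) + 1) + 1) * x / 2)
              = (-x / 2) + (-(3 * ((n:ℝ) + 1)) * x) by ring,
            Real.exp_add, pow_succ, Nat.factorial_succ]
          push_cast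
          have h1 : (n.factorial : ℝ) ≠ 0 := by positivity
          have h2 : ((n:ℝ) + 1) ≠ 0 := by positivity
          field_simp
          ring
      _ = C * (2 * C ^ 2 / 3) ^ (n + 1) / (((n:ℕ) + 1).factorial : ℝ)
            * Real.exp (-Real.exp x) * Real.exp (-(6 * (((n:ℕ) + 1 : ℕ) : ℝ) + 1) * x / 2) := by
          push_cast
          ring_nf

/-- The series of successive approximations converges absolutely, and its sum `S`
satisfies `|S(x) − g(x)| ≤ C (e^{2C²/3} − 1) e^{−eˣ} e^{−7x/2}` for `x ≥ 0`. -/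
theorem stmt_13 (C : ℝ) (hC : 0 < C) (g h : ℝ → ℂ)
    (hg_cont : Continuous g) (hh_cont : Continuous h)
    (hg : ∀ x : ℝ, ‖g x‖ ≤ C * Real.exp (-Real.exp x) * Real.exp (-x / 2))
    (hh : ∀ x : ℝ, ‖h x‖ ≤ C * Real.exp (Real.exp x) * Real.exp (-x / 2))
    (f : ℕ → ℝ → ℂ) (hf0 : f 0 = g)
    (hf : ∀ n : ℕ, ∀ x : ℝ,
      f (n + 1) x =
        ∫ y in Set.Ioi x, (h x * g y - g x * h y) * Real.exp (-2 * y) * f n y) :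
    (∀ x : ℝ, Summable (fun n : ℕ => ‖f n x‖)) ∧
    (∀ x : ℝ, 0 ≤ x →
      ‖(∑' n : ℕ, f n x) - g x‖ ≤
        C * (Real.exp (2 * C ^ 2 / 3) - 1)
          * Real.exp (-Real.exp x) * Real.exp (-7 * x / 2)) := by
  have hbound := aux_bound C hC g h hg hh f hf0 hf
  have hsumm : ∀ x : ℝ, Summable (fun n : ℕ => ‖f n x‖) := by
    intro x
    have hS : Summable (fun n : ℕ =>
        (C * Real.exp (-Real.exp x) * Real.exp (-x / 2))
          * ((2 * C ^ 2 / 3 * Real.exp (-3 * x)) ^ n / (n.factorial : ℝ))) :=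
      (Real.summable_pow_div_factorial _).mul_left _
    refine Summable.of_nonneg_of_le (fun n => norm_nonneg _) (fun n => ?_) hS
    refine (hbound n x).trans_eq ?_
    rw [show (-(6 * (n:ℝ) + 1) * x / 2) = (-x / 2) + (n:ℝ) * (-3 * x) by ring,
      Real.exp_add, Real.exp_nat_mul, mul_pow]
    ring
  refine ⟨hsumm, fun x hx => ?_⟩
  have hsum : Summable (fun n : ℕ => f n x) := (hsumm x).of_norm
  rw [Summable.tsum_eq_zero_add hsum, hf0, add_sub_cancel_left]
  have htail : Summable (fun n : ℕ => ‖f (n + 1) x‖) :=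
    (hsumm x).comp_injective (add_left_injective 1)
  have hT : Summable (fun n : ℕ =>
      (C * Real.exp (-Real.exp x) * Real.exp (-7 * x / 2))
        * ((2 * C ^ 2 / 3) ^ (n + 1) / ((n + 1).factorial : ℝ))) :=
    (((Real.summable_pow_div_factorial (2 * C ^ 2 / 3)).comp_injective
      (add_left_injective 1)).mul_left _)
  calc ‖∑' n : ℕ, f (n + 1) x‖ ≤ ∑' n : ℕ, ‖f (n + 1) x‖ := norm_tsum_le_tsum_norm htail
    _ ≤ ∑' n : ℕ, (C * Real.exp (-Real.exp x) * Real.exp (-7 * x / 2))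
          * ((2 * C ^ 2 / 3) ^ (n + 1) / ((n + 1).factorial : ℝ)) := by
        refine Summable.tsum_le_tsum (fun n => ?_) htail hT
        refine (hbound (n + 1) x).trans ?_
        have hexp : Real.exp (-(6 * (((n:ℕ) + 1 : ℕ) : ℝ) + 1) * x / 2)
            ≤ Real.exp (-7 * x / 2) := by
          apply Real.exp_le_exp.mpr
          have hn : (0:ℝ) ≤ (n:ℝ) := Nat.cast_nonneg n
          push_cast
          nlinarith [mul_nonneg hn hx]
        calc C * (2 * C ^ 2 / 3) ^ (n + 1) / (((n:ℕ) + 1).factorial : ℝ)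
              * Real.exp (-Real.exp x) * Real.exp (-(6 * (((n:ℕ) + 1 : ℕ) : ℝ) + 1) * x / 2)
            ≤ C * (2 * C ^ 2 / 3) ^ (n + 1) / (((n:ℕ) + 1).factorial : ℝ)
              * Real.exp (-Real.exp x) * Real.exp (-7 * x / 2) := by
              apply mul_le_mul_of_nonneg_left hexp (by positivity)
          _ = (C * Real.exp (-Real.exp x) * Real.exp (-7 * x / 2))
              * ((2 * C ^ 2 / 3) ^ (n + 1) / ((n + 1).factorial : ℝ)) := by ring
    _ = (C * Real.exp (-Real.exp x) * Real.exp (-7 * x / 2))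
          * ∑' n : ℕ, ((2 * C ^ 2 / 3) ^ (n + 1) / ((n + 1).factorial : ℝ)) := tsum_mul_left
    _ = C * (Real.exp (2 * C ^ 2 / 3) - 1)
          * Real.exp (-Real.exp x) * Real.exp (-7 * x / 2) := by
        rw [aux_tail]; ring
end

section
/- Let C > 0 and let g, h : ℝ → ℂ be continuous functions satisfying |g(x)| ≤ C·e^{−eˣ}·e^{−x/2} and |h(x)| ≤ C·e^{eˣ}·e^{−x/2} for all x ∈ ℝ. Define f₀ = g, f_{n+1}(x) = ∫ₓ^∞ (h(x)g(y) − g(x)h(y))·e^{−2y}·f_n(y) dy, and S(x) = ∑_{n=0}^∞ f_n(x). Then for every x ∈ ℝ the function y ↦ (h(x)g(y) − g(x)h(y))·e^{−2y}·S(y) is absolutely integrable on [x,∞) and S satisfies the integral equation S(x) = g(x) + ∫ₓ^∞ (h(x)g(y) − g(x)h(y))·e^{−2y}·S(y) dy. -/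
set_option maxHeartbeats 2000000

open Real MeasureTheory

namespace Stmt14Aux

/-- The coefficient sequence in the bound on the successive approximations. -/
noncomputable def B (C : ℝ) : ℕ → ℝ := fun n => C * (2 * C ^ 2 / 3) ^ n / n.factorial

lemma B_pos {C : ℝ} (hC : 0 < C) (n : ℕ) : 0 < B C n := by
  apply div_pos (mul_pos hC (pow_pos (by positivity) n))
    (Nat.cast_pos.2 n.factorial_pos)

lemma B_zero (C : ℝ) : B C 0 = C := by simp [B]

lemma B_succ (C : ℝ) (n : ℕ) :
    B C (n + 1) = 2 * C ^ 2 * B C n / (3 * ((n : ℝ) + 1)) := by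
  have h1 : ((n.factorial : ℝ)) ≠ 0 := Nat.cast_ne_zero.2 n.factorial_ne_zero
  have h2 : ((n : ℝ) + 1) ≠ 0 := by positivity
  simp only [B, pow_succ, Nat.factorial_succ]
  push_cast
  field_simp

lemma B_summable {C : ℝ} (x : ℝ) :
    Summable fun n : ℕ => B C n * Real.exp (-(3 * (n : ℝ)) * x) := by
  have h := (Real.summable_pow_div_factorial (2 * C ^ 2 / 3 * Real.exp (-(3 * x)))).mul_left C
  apply h.congr
  intro n
  have hx : (-(3 * (n : ℝ)) * x) = (n : ℝ) * (-(3 * x)) := by ring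
  rw [B, hx, Real.exp_nat_mul, mul_pow]
  ring

lemma integral_exp_neg_mul_Ioi {b : ℝ} (hb : 0 < b) (x : ℝ) :
    ∫ y in Set.Ioi x, Real.exp (-b * y) = Real.exp (-b * x) / b := by
  have hd : ∀ y ∈ Set.Ici x,
      HasDerivAt (fun z => -Real.exp (-b * z) / b) (Real.exp (-b * y)) y := by
    intro y _
    have h1 : HasDerivAt (fun z : ℝ => -b * z) (-b) y := by
      simpa using (hasDerivAt_id y).const_mul (-b)
    have h2 : HasDerivAt (fun z : ℝ => Real.exp (-b * z)) (Real.exp (-b * y) * (-b)) y :=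
      (Real.hasDerivAt_exp (-b * y)).comp y h1
    have h3 := (h2.neg).div_const b
    exact h3.congr_deriv (by field_simp)
  have htend : Filter.Tendsto (fun z => -Real.exp (-b * z) / b) Filter.atTop (nhds 0) := by
    have h1 : Filter.Tendsto (fun z : ℝ => b * z) Filter.atTop Filter.atTop :=
      Filter.Tendsto.const_mul_atTop hb Filter.tendsto_id
    have h2 : Filter.Tendsto (fun z : ℝ => -b * z) Filter.atTop Filter.atBot := by
      simp only [neg_mul]
      exact Filter.tendsto_neg_atBot_iff.2 h1
    have h3 : Filter.Tendsto (fun z : ℝ => Real.exp (-b * z)) Filter.atTop (nhds 0) :=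
      Real.tendsto_exp_atBot.comp h2
    have h4 := (h3.neg).div_const b
    simpa using h4
  rw [integral_Ioi_of_hasDerivAt_of_tendsto' hd (exp_neg_integrableOn_Ioi x hb) htend]
  field_simp
  ring

lemma cont_Ioi_integral (φ : ℝ → ℂ) (hm : ∀ x : ℝ, IntegrableOn φ (Set.Ioi x)) :
    Continuous fun x => ∫ y in Set.Ioi x, φ y := by
  have hii : ∀ a b : ℝ, IntervalIntegrable φ volume a b := by
    intro a b
    rw [intervalIntegrable_iff]
    exact (hm (min a b)).mono_set Set.Ioc_subset_Ioi_self
  have hdisj : ∀ a b : ℝ, Disjoint (Set.Ioc a b) (Set.Ioi b) := by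
    intro a b
    rw [Set.disjoint_left]
    rintro y ⟨_, h1⟩ h2
    exact absurd h2 (not_lt.2 h1)
  have heq : ∀ x : ℝ, (∫ y in Set.Ioi x, φ y)
      = (∫ y in Set.Ioi (0 : ℝ), φ y) - ∫ y in (0 : ℝ)..x, φ y := by
    intro x
    rcases le_or_gt x 0 with hx | hx
    · have hsplit : ∫ y in Set.Ioi x, φ y
          = (∫ y in Set.Ioc x 0, φ y) + ∫ y in Set.Ioi (0 : ℝ), φ y := by
        rw [← Set.Ioc_union_Ioi_eq_Ioi hx]
        exact MeasureTheory.setIntegral_union (hdisj x 0) measurableSet_Ioi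
          ((hm x).mono_set Set.Ioc_subset_Ioi_self) (hm 0)
      rw [hsplit, intervalIntegral.integral_symm, intervalIntegral.integral_of_le hx]
      ring
    · have hsplit : ∫ y in Set.Ioi (0 : ℝ), φ y
          = (∫ y in Set.Ioc 0 x, φ y) + ∫ y in Set.Ioi x, φ y := by
        rw [← Set.Ioc_union_Ioi_eq_Ioi hx.le]
        exact MeasureTheory.setIntegral_union (hdisj 0 x) measurableSet_Ioi
          ((hm 0).mono_set Set.Ioc_subset_Ioi_self) (hm x)
      rw [intervalIntegral.integral_of_le hx.le, hsplit]
      ring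
  have hc : Continuous fun x : ℝ =>
      (∫ y in Set.Ioi (0 : ℝ), φ y) - ∫ y in (0 : ℝ)..x, φ y :=
    continuous_const.sub (intervalIntegral.continuous_primitive hii 0)
  exact hc.congr fun x => (heq x).symm

end Stmt14Aux

open Stmt14Aux

/-- The sum `S` of the successive approximations solves the Volterra integral
equation `S(x) = g(x) + ∫ₓ^∞ (h(x)g(y) − g(x)h(y)) e^{−2y} S(y) dy`. -/
theorem stmt_14 (C : ℝ) (hC : 0 < C) (g h : ℝ → ℂ)
    (hg_cont : Continuous g) (hh_cont : Continuous h)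
    (hg : ∀ x : ℝ, ‖g x‖ ≤ C * Real.exp (-Real.exp x) * Real.exp (-x / 2))
    (hh : ∀ x : ℝ, ‖h x‖ ≤ C * Real.exp (Real.exp x) * Real.exp (-x / 2))
    (f : ℕ → ℝ → ℂ) (hf0 : f 0 = g)
    (hf : ∀ n : ℕ, ∀ x : ℝ,
      f (n + 1) x =
        ∫ y in Set.Ioi x, (h x * g y - g x * h y) * Real.exp (-2 * y) * f n y)
    (S : ℝ → ℂ) (hS : S = fun x => ∑' n : ℕ, f n x) :
    ∀ x : ℝ,
      IntegrableOn (fun y => (h x * g y - g x * h y) * Real.exp (-2 * y) * S y)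
        (Set.Ioi x) ∧
      S x = g x +
        ∫ y in Set.Ioi x, (h x * g y - g x * h y) * Real.exp (-2 * y) * S y := by
  -- kernel bound
  have kerbound : ∀ (c b : ℝ), 0 ≤ c → ∀ (x y : ℝ), x ≤ y → ∀ w : ℂ,
      ‖w‖ ≤ c * Real.exp (-Real.exp y) * Real.exp (-b * y) * Real.exp (-y / 2) →
      ‖(h x * g y - g x * h y) * (Real.exp (-2 * y) : ℂ) * w‖
        ≤ 2 * C ^ 2 * c * Real.exp (-Real.exp x) * Real.exp (-x / 2)
          * Real.exp (-(b + 3) * y) := by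
    intro c b hc x y hxy w hw
    have hxy' : Real.exp x ≤ Real.exp y := Real.exp_le_exp.2 hxy
    calc ‖(h x * g y - g x * h y) * (Real.exp (-2 * y) : ℂ) * w‖
        = ‖h x * g y - g x * h y‖ * Real.exp (-2 * y) * ‖w‖ := by
          rw [norm_mul, norm_mul, Complex.norm_real, Real.norm_eq_abs,
            abs_of_pos (Real.exp_pos _)]
      _ ≤ (‖h x‖ * ‖g y‖ + ‖g x‖ * ‖h y‖) * Real.exp (-2 * y) * ‖w‖ := by
          gcongr
          exact (norm_sub_le _ _).trans (by rw [norm_mul, norm_mul])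
      _ ≤ ((C * Real.exp (Real.exp x) * Real.exp (-x / 2))
              * (C * Real.exp (-Real.exp y) * Real.exp (-y / 2))
            + (C * Real.exp (-Real.exp x) * Real.exp (-x / 2))
              * (C * Real.exp (Real.exp y) * Real.exp (-y / 2)))
            * Real.exp (-2 * y)
            * (c * Real.exp (-Real.exp y) * Real.exp (-b * y) * Real.exp (-y / 2)) := by
          gcongr <;>
            first
              | exact hh x
              | exact hg y
              | exact hg x
              | exact hh y
              | exact hw
      _ = C ^ 2 * c *
            (Real.exp (Real.exp x + -Real.exp y + -Real.exp y
                + (-x / 2 + -y / 2 + (-2 * y) + -b * y + -y / 2))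
             + Real.exp (-Real.exp x + (Real.exp y + -Real.exp y)
                + (-x / 2 + -y / 2 + (-2 * y) + -b * y + -y / 2))) := by
          simp only [Real.exp_add]
          ring
      _ ≤ C ^ 2 * c *
            (Real.exp (-Real.exp x + (-x / 2 + -y / 2 + (-2 * y) + -b * y + -y / 2))
             + Real.exp (-Real.exp x + (-x / 2 + -y / 2 + (-2 * y) + -b * y + -y / 2))) := by
          have hcc : (0:ℝ) ≤ C ^ 2 * c := by positivity
          apply mul_le_mul_of_nonneg_left _ hcc
          apply add_le_add
          · exact Real.exp_le_exp.2 (by linarith)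
          · exact Real.exp_le_exp.2 (by linarith)
      _ = 2 * C ^ 2 * c * Real.exp (-Real.exp x) * Real.exp (-x / 2)
            * Real.exp (-(b + 3) * y) := by
          rw [show (-(b + 3) * y : ℝ) = -b * y + (-y / 2 + (-2 * y) + -y / 2) by ring]
          simp only [Real.exp_add]
          ring
  -- main induction: continuity and bounds
  have key : ∀ n : ℕ, Continuous (f n) ∧ ∀ x : ℝ,
      ‖f n x‖ ≤ B C n * Real.exp (-Real.exp x) * Real.exp (-(3 * (n : ℝ)) * x)
        * Real.exp (-x / 2) := by
    intro n
    induction n with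
    | zero =>
      constructor
      · rw [hf0]; exact hg_cont
      · intro x
        rw [hf0]
        simpa [B_zero] using hg x
    | succ n ih =>
      obtain ⟨ihc, ihb⟩ := ih
      have hb3 : (0:ℝ) < 3 * (n : ℝ) + 3 := by positivity
      have hBp := B_pos hC n
      -- bound for the kernel times f n
      have hker : ∀ x y : ℝ, x ≤ y →
          ‖(h x * g y - g x * h y) * (Real.exp (-2 * y) : ℂ) * f n y‖
            ≤ 2 * C ^ 2 * B C n * Real.exp (-Real.exp x) * Real.exp (-x / 2)
              * Real.exp (-(3 * (n : ℝ) + 3) * y) := by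
        intro x y hxy
        exact kerbound (B C n) (3 * (n : ℝ)) hBp.le x y hxy (f n y) (ihb y)
      have hbint : ∀ x : ℝ,
          Integrable (fun y => 2 * C ^ 2 * B C n * Real.exp (-Real.exp x)
              * Real.exp (-x / 2) * Real.exp (-(3 * (n : ℝ) + 3) * y))
            (volume.restrict (Set.Ioi x)) :=
        fun x => (exp_neg_integrableOn_Ioi x hb3).const_mul _
      have hcontker : ∀ x : ℝ, Continuous
          (fun y => (h x * g y - g x * h y) * (Real.exp (-2 * y) : ℂ) * f n y) := by
        intro x
        apply Continuous.mul _ ihc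
        apply Continuous.mul ((continuous_const.mul hg_cont).sub (continuous_const.mul hh_cont))
        exact Complex.continuous_ofReal.comp (Real.continuous_exp.comp (by fun_prop))
      have hintg : ∀ x : ℝ, IntegrableOn
          (fun y => (h x * g y - g x * h y) * (Real.exp (-2 * y) : ℂ) * f n y)
          (Set.Ioi x) := by
        intro x
        apply Integrable.mono' (hbint x) ((hcontker x).aestronglyMeasurable)
        filter_upwards [ae_restrict_mem measurableSet_Ioi] with y hy
        exact hker x y hy.le
      -- integrability of the two separate pieces
      have hGH : ∀ u : ℝ → ℂ, Continuous u →
          (∀ y, ‖u y‖ ≤ C * Real.exp (Real.exp y) * Real.exp (-y / 2)) →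
          ∀ x : ℝ, IntegrableOn (fun y => u y * (Real.exp (-2 * y) : ℂ) * f n y)
            (Set.Ioi x) := by
        intro u hu hub x
        have hbnd : ∀ y : ℝ, ‖u y * (Real.exp (-2 * y) : ℂ) * f n y‖
            ≤ C * B C n * Real.exp (-(3 * (n : ℝ) + 3) * y) := by
          intro y
          have e1 : Real.exp (-Real.exp y) ≤ 1 := by
            rw [show (1:ℝ) = Real.exp 0 by simp]
            exact Real.exp_le_exp.2 (neg_nonpos.mpr (Real.exp_pos y).le)
          calc ‖u y * (Real.exp (-2 * y) : ℂ) * f n y‖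
              = ‖u y‖ * Real.exp (-2 * y) * ‖f n y‖ := by
                rw [norm_mul, norm_mul, Complex.norm_real, Real.norm_eq_abs,
                  abs_of_pos (Real.exp_pos _)]
            _ ≤ (C * Real.exp (Real.exp y) * Real.exp (-y / 2)) * Real.exp (-2 * y)
                * (B C n * Real.exp (-Real.exp y) * Real.exp (-(3 * (n : ℝ)) * y)
                  * Real.exp (-y / 2)) := by
                gcongr
                · exact hub y
                · exact ihb y
            _ = C * B C n * (Real.exp (Real.exp y) * Real.exp (-Real.exp y))
                * Real.exp (-(3 * (n : ℝ) + 3) * y) := by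
                rw [show (-(3 * (n : ℝ) + 3) * y : ℝ)
                    = -y / 2 + (-2 * y) + (-(3 * (n : ℝ)) * y + -y / 2) by ring]
                simp only [Real.exp_add]
                ring
            _ ≤ C * B C n * 1 * Real.exp (-(3 * (n : ℝ) + 3) * y) := by
                have : Real.exp (Real.exp y) * Real.exp (-Real.exp y) = 1 := by
                  rw [← Real.exp_add]; simp
                rw [this]
            _ = C * B C n * Real.exp (-(3 * (n : ℝ) + 3) * y) := by ring
        apply Integrable.mono' ((exp_neg_integrableOn_Ioi x hb3).const_mul (C * B C n))
        · exact Continuous.aestronglyMeasurable <| by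
            apply Continuous.mul _ ihc
            exact hu.mul (Complex.continuous_ofReal.comp
              (Real.continuous_exp.comp (by fun_prop)))
        · filter_upwards with y
          exact hbnd y
      have hgub : ∀ y : ℝ, ‖g y‖ ≤ C * Real.exp (Real.exp y) * Real.exp (-y / 2) := by
        intro y
        refine (hg y).trans ?_
        have h1 : Real.exp (-Real.exp y) ≤ Real.exp (Real.exp y) :=
          Real.exp_le_exp.2 (by linarith [Real.exp_pos y])
        exact mul_le_mul_of_nonneg_right
          (mul_le_mul_of_nonneg_left h1 hC.le) (Real.exp_pos _).le
      have i1 := hGH g hg_cont hgub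
      have i2 := hGH h hh_cont hh
      constructor
      · -- continuity of f (n+1)
        have hfeq : f (n + 1) = fun x =>
            h x * (∫ y in Set.Ioi x, g y * (Real.exp (-2 * y) : ℂ) * f n y)
            - g x * (∫ y in Set.Ioi x, h y * (Real.exp (-2 * y) : ℂ) * f n y) := by
          funext x
          rw [hf n x]
          have heq : ∀ y : ℝ, (h x * g y - g x * h y) * (Real.exp (-2 * y) : ℂ) * f n y
              = h x * (g y * (Real.exp (-2 * y) : ℂ) * f n y)
                - g x * (h y * (Real.exp (-2 * y) : ℂ) * f n y) := by
            intro y; ring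
          simp only [heq]
          rw [integral_sub ((i1 x).const_mul (h x)) ((i2 x).const_mul (g x)),
            integral_const_mul, integral_const_mul]
        rw [hfeq]
        exact (hh_cont.mul (cont_Ioi_integral _ i1)).sub
          (hg_cont.mul (cont_Ioi_integral _ i2))
      · intro x
        rw [hf n x]
        have hn := norm_integral_le_of_norm_le (hbint x)
          (by filter_upwards [ae_restrict_mem measurableSet_Ioi] with y hy
              exact hker x y hy.le)
        refine hn.trans ?_
        rw [integral_const_mul, integral_exp_neg_mul_Ioi hb3]
        rw [B_succ C n]
        push_cast
        have hx1 : (-(3 * ((n : ℝ) + 1)) * x) = -(3 * (n : ℝ) + 3) * x := by ring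
        rw [hx1]
        have h30 : (3 * (n : ℝ) + 3) ≠ 0 := by positivity
        field_simp
        ring_nf
        exact le_refl _
  have hcont : ∀ n, Continuous (f n) := fun n => (key n).1
  have hbnd := fun n => (key n).2
  have hsumnorm : ∀ y : ℝ, Summable fun n => ‖f n y‖ := by
    intro y
    apply Summable.of_nonneg_of_le (fun n => norm_nonneg _) (fun n => hbnd n y)
    apply Summable.congr ((B_summable (C := C) y).mul_right
      (Real.exp (-Real.exp y) * Real.exp (-y / 2)))
    intro n; ring
  have hsumf : ∀ y : ℝ, Summable fun n => f n y := fun y => (hsumnorm y).of_norm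
  have hSmeas : Measurable S := by
    rw [hS]
    apply measurable_of_tendsto_metrizable
      (f := fun N x => ∑ i ∈ Finset.range N, f i x)
      (fun N => Finset.measurable_sum _ fun i _ => (hcont i).measurable)
    rw [tendsto_pi_nhds]
    exact fun x => (hsumf x).hasSum.tendsto_sum_nat
  intro x
  -- uniform bound for S on [x, ∞)
  set M : ℝ := ∑' n : ℕ, B C n * Real.exp (-(3 * (n : ℝ)) * x) with hM
  have hMnn : 0 ≤ M :=
    tsum_nonneg fun n => mul_nonneg (B_pos hC n).le (Real.exp_pos _).le
  have hSb : ∀ y : ℝ, x ≤ y →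
      ‖S y‖ ≤ M * Real.exp (-Real.exp y) * Real.exp (-(0:ℝ) * y) * Real.exp (-y / 2) := by
    intro y hy
    rw [hS]
    simp only [neg_zero, zero_mul, Real.exp_zero, mul_one]
    calc ‖∑' n : ℕ, f n y‖ ≤ ∑' n : ℕ, ‖f n y‖ := norm_tsum_le_tsum_norm (hsumnorm y)
      _ ≤ ∑' n : ℕ, (B C n * Real.exp (-(3 * (n : ℝ)) * x))
            * (Real.exp (-Real.exp y) * Real.exp (-y / 2)) := by
          apply Summable.tsum_le_tsum _ (hsumnorm y)
            ((B_summable (C := C) x).mul_right _)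
          intro n
          refine (hbnd n y).trans ?_
          have hmono : Real.exp (-(3 * (n : ℝ)) * y) ≤ Real.exp (-(3 * (n : ℝ)) * x) := by
            apply Real.exp_le_exp.2
            apply mul_le_mul_of_nonpos_left hy
            simp only [neg_nonpos]
            positivity
          calc B C n * Real.exp (-Real.exp y) * Real.exp (-(3 * (n : ℝ)) * y)
                * Real.exp (-y / 2)
              ≤ B C n * Real.exp (-Real.exp y) * Real.exp (-(3 * (n : ℝ)) * x)
                * Real.exp (-y / 2) :=
                mul_le_mul_of_nonneg_right
                  (mul_le_mul_of_nonneg_left hmono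
                    (mul_nonneg (B_pos hC n).le (Real.exp_pos _).le))
                  (Real.exp_pos _).le
            _ = (B C n * Real.exp (-(3 * (n : ℝ)) * x))
                * (Real.exp (-Real.exp y) * Real.exp (-y / 2)) := by ring
      _ = M * (Real.exp (-Real.exp y) * Real.exp (-y / 2)) := by
          rw [hM, tsum_mul_right]
      _ = M * Real.exp (-Real.exp y) * Real.exp (-y / 2) := by ring
  -- integrability of the kernel against S
  have hmeasK : AEStronglyMeasurable
      (fun y => (h x * g y - g x * h y) * (Real.exp (-2 * y) : ℂ) * S y)
      (volume.restrict (Set.Ioi x)) := by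
    apply Measurable.aestronglyMeasurable
    apply Measurable.mul _ hSmeas
    apply Measurable.mul
    · exact (measurable_const.mul hg_cont.measurable).sub
        (measurable_const.mul hh_cont.measurable)
    · exact Complex.measurable_ofReal.comp (Real.measurable_exp.comp (by fun_prop))
  have part1 : IntegrableOn
      (fun y => (h x * g y - g x * h y) * (Real.exp (-2 * y) : ℂ) * S y)
      (Set.Ioi x) := by
    apply Integrable.mono'
      ((exp_neg_integrableOn_Ioi x (show (0:ℝ) < (0:ℝ) + 3 by norm_num)).const_mul
        (2 * C ^ 2 * M * Real.exp (-Real.exp x) * Real.exp (-x / 2))) hmeasK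
    filter_upwards [ae_restrict_mem measurableSet_Ioi] with y hy
    exact kerbound M 0 hMnn x y hy.le (S y) (hSb y hy.le)
  refine ⟨part1, ?_⟩
  -- bounds justifying interchange of sum and integral
  have hBp := B_pos hC
  have hlintn : ∀ n : ℕ, (∫⁻ y in Set.Ioi x,
      ‖(h x * g y - g x * h y) * (Real.exp (-2 * y) : ℂ) * f n y‖₊)
        ≤ ENNReal.ofReal (2 * C ^ 2 * B C n * Real.exp (-Real.exp x)
          * Real.exp (-x / 2) * (Real.exp (-(3 * (n : ℝ) + 3) * x) / (3 * (n : ℝ) + 3))) := by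
    intro n
    have hb3 : (0:ℝ) < 3 * (n : ℝ) + 3 := by positivity
    have hker : ∀ y : ℝ, y ∈ Set.Ioi x →
        ‖(h x * g y - g x * h y) * (Real.exp (-2 * y) : ℂ) * f n y‖
          ≤ 2 * C ^ 2 * B C n * Real.exp (-Real.exp x) * Real.exp (-x / 2)
            * Real.exp (-(3 * (n : ℝ) + 3) * y) :=
      fun y hy => kerbound (B C n) (3 * (n : ℝ)) (hBp n).le x y hy.le (f n y) (hbnd n y)
    have hbi : Integrable (fun y => 2 * C ^ 2 * B C n * Real.exp (-Real.exp x)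
        * Real.exp (-x / 2) * Real.exp (-(3 * (n : ℝ) + 3) * y))
        (volume.restrict (Set.Ioi x)) :=
      (exp_neg_integrableOn_Ioi x hb3).const_mul _
    calc (∫⁻ y in Set.Ioi x,
        ‖(h x * g y - g x * h y) * (Real.exp (-2 * y) : ℂ) * f n y‖₊)
        ≤ ∫⁻ y in Set.Ioi x, ENNReal.ofReal (2 * C ^ 2 * B C n * Real.exp (-Real.exp x)
            * Real.exp (-x / 2) * Real.exp (-(3 * (n : ℝ) + 3) * y)) := by
          apply lintegral_mono_ae
          filter_upwards [ae_restrict_mem measurableSet_Ioi] with y hy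
          rw [← enorm_eq_nnnorm, ← ofReal_norm]
          exact ENNReal.ofReal_le_ofReal (hker y hy)
      _ = ENNReal.ofReal (∫ y in Set.Ioi x, 2 * C ^ 2 * B C n * Real.exp (-Real.exp x)
            * Real.exp (-x / 2) * Real.exp (-(3 * (n : ℝ) + 3) * y)) := by
          rw [MeasureTheory.ofReal_integral_eq_lintegral_ofReal hbi]
          filter_upwards with y
          have := (B_pos hC n).le
          exact mul_nonneg (mul_nonneg (mul_nonneg
            (mul_nonneg (by positivity) this) (Real.exp_pos _).le)
            (Real.exp_pos _).le) (Real.exp_pos _).le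
      _ = ENNReal.ofReal (2 * C ^ 2 * B C n * Real.exp (-Real.exp x)
            * Real.exp (-x / 2) * (Real.exp (-(3 * (n : ℝ) + 3) * x) / (3 * (n : ℝ) + 3))) := by
          rw [integral_const_mul, integral_exp_neg_mul_Ioi hb3]
  have hEsum : Summable (fun n : ℕ => 2 * C ^ 2 * B C n * Real.exp (-Real.exp x)
      * Real.exp (-x / 2) * (Real.exp (-(3 * (n : ℝ) + 3) * x) / (3 * (n : ℝ) + 3))) := by
    have h1 : Summable (fun n : ℕ => B C (n + 1) * Real.exp (-(3 * ((n : ℝ) + 1)) * x)) := by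
      have := (summable_nat_add_iff (f := fun n : ℕ =>
        B C n * Real.exp (-(3 * (n : ℝ)) * x)) 1).2 (B_summable (C := C) x)
      apply this.congr
      intro n
      push_cast
      ring_nf
    apply Summable.congr (h1.mul_right (Real.exp (-Real.exp x) * Real.exp (-x / 2)))
    intro n
    rw [B_succ C n]
    have hx1 : (-(3 * ((n : ℝ) + 1)) * x) = -(3 * (n : ℝ) + 3) * x := by ring
    rw [hx1]
    have h30 : (3 * ((n : ℝ)) + 3) ≠ 0 := by positivity
    field_simp
  have hlint : (∑' n : ℕ, ∫⁻ y in Set.Ioi x,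
      ‖(h x * g y - g x * h y) * (Real.exp (-2 * y) : ℂ) * f n y‖₊) ≠ ⊤ := by
    apply ne_of_lt
    calc (∑' n : ℕ, ∫⁻ y in Set.Ioi x,
        ‖(h x * g y - g x * h y) * (Real.exp (-2 * y) : ℂ) * f n y‖₊)
        ≤ ∑' n : ℕ, ENNReal.ofReal (2 * C ^ 2 * B C n * Real.exp (-Real.exp x)
            * Real.exp (-x / 2) * (Real.exp (-(3 * (n : ℝ) + 3) * x) / (3 * (n : ℝ) + 3))) :=
          ENNReal.tsum_le_tsum hlintn
      _ = ENNReal.ofReal (∑' n : ℕ, 2 * C ^ 2 * B C n * Real.exp (-Real.exp x)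
            * Real.exp (-x / 2) * (Real.exp (-(3 * (n : ℝ) + 3) * x) / (3 * (n : ℝ) + 3))) :=
          (ENNReal.ofReal_tsum_of_nonneg (fun n =>
            mul_nonneg (mul_nonneg (mul_nonneg
              (mul_nonneg (by positivity) (B_pos hC n).le) (Real.exp_pos _).le)
              (Real.exp_pos _).le) (by positivity)) hEsum).symm
      _ < ⊤ := ENNReal.ofReal_lt_top
  have hmeasn : ∀ n : ℕ, AEStronglyMeasurable
      (fun y => (h x * g y - g x * h y) * (Real.exp (-2 * y) : ℂ) * f n y)
      (volume.restrict (Set.Ioi x)) := by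
    intro n
    apply Continuous.aestronglyMeasurable
    apply Continuous.mul _ (hcont n)
    apply Continuous.mul ((continuous_const.mul hg_cont).sub (continuous_const.mul hh_cont))
    exact Complex.continuous_ofReal.comp (Real.continuous_exp.comp (by fun_prop))
  have hswap : (∑' n : ℕ, f (n + 1) x)
      = ∫ y in Set.Ioi x, (h x * g y - g x * h y) * (Real.exp (-2 * y) : ℂ) * S y := by
    calc (∑' n : ℕ, f (n + 1) x)
        = ∑' n : ℕ, ∫ y in Set.Ioi x,
            (h x * g y - g x * h y) * (Real.exp (-2 * y) : ℂ) * f n y :=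
          tsum_congr fun n => hf n x
      _ = ∫ y in Set.Ioi x, ∑' n : ℕ,
            (h x * g y - g x * h y) * (Real.exp (-2 * y) : ℂ) * f n y :=
          (MeasureTheory.integral_tsum hmeasn hlint).symm
      _ = ∫ y in Set.Ioi x, (h x * g y - g x * h y) * (Real.exp (-2 * y) : ℂ) * S y := by
          apply integral_congr_ae
          filter_upwards with y
          rw [hS]
          exact tsum_mul_left
  have h0 : S x = g x + ∑' n : ℕ, f (n + 1) x := by
    rw [hS]
    have := Summable.tsum_eq_zero_add (hsumf x)
    rw [hf0] at this
    exact this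
  rw [h0, hswap]
end
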